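/- arXiv:2604.11076 — 9 statements merged into one kernel-verified Lean document; each statement's English description precedes it below -/
import Mathlib

section
/- As β → 0⁺, the first eigenvalue of the Robin Laplacian on (0,1) with parameter β satisfies λ₁(β) = 2β + O(β²). -/
open Real Filter Asymptotics

lemma tan_le_cubic {x : ℝ} (hx : 0 < x) (hx1 : x ≤ 1) :
    Real.tan x ≤ x + x ^ 3 := by
  have hxpi : x < Real.pi / 2 := lt_of_le_of_lt hx1 (by
    have := Real.pi_gt_three; linarith)
  have hcos : 0 < Real.cos x :=
    Real.cos_pos_of_mem_Ioo ⟨by linarith, hxpi⟩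
  rw [Real.tan_eq_sin_div_cos, div_le_iff₀ hcos]
  have hsin : Real.sin x ≤ x := (Real.sin_lt hx).le
  have hcb : 1 - x ^ 2 / 2 ≤ Real.cos x := Real.one_sub_sq_div_two_le_cos
  have hpos : 0 ≤ x + x ^ 3 := by positivity
  have key : (x + x ^ 3) * (1 - x ^ 2 / 2) ≤ (x + x ^ 3) * Real.cos x :=
    mul_le_mul_of_nonneg_left hcb hpos
  have h1x : 0 ≤ 1 - x ^ 2 := by nlinarith
  nlinarith [mul_nonneg (pow_pos hx 3).le h1x]

/-- as β → 0⁺, the first Robin eigenvalue λ₁(β) on (0,1) satisfies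
λ₁(β) = 2β + O(β²).  Here λ₁(β) is characterized as the unique λ ∈ (0,π²) with
β = √λ tan(√λ/2). -/
theorem robin_first_eigenvalue_asymptotics
    (lam1 : ℝ → ℝ)
    (h : ∀ β : ℝ, 0 < β → lam1 β ∈ Set.Ioo 0 (Real.pi ^ 2) ∧
      β = Real.sqrt (lam1 β) * Real.tan (Real.sqrt (lam1 β) / 2)) :
    (fun β => lam1 β - 2 * β) =O[nhdsWithin 0 (Set.Ioi 0)] (fun β => β ^ 2) := by
  rw [isBigO_iff]
  refine ⟨1, ?_⟩
  filter_upwards [Ioo_mem_nhdsGT_of_mem (by norm_num : (0:ℝ) ∈ Set.Ico 0 1)]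
    with β hβ
  obtain ⟨hβ0, hβ1⟩ := hβ
  obtain ⟨⟨hl0, hlpi⟩, heq⟩ := h β hβ0
  set l := lam1 β with hl
  set s := Real.sqrt l with hs
  have hs0 : 0 < s := Real.sqrt_pos.mpr hl0
  have hss : s * s = l := Real.mul_self_sqrt hl0.le
  have hspi : s < Real.pi := by
    rw [hs, show Real.pi = Real.sqrt (Real.pi ^ 2) by
      rw [Real.sqrt_sq Real.pi_pos.le]]
    exact Real.sqrt_lt_sqrt hl0.le hlpi
  -- lower bound: β ≥ l/2
  have htan_lb : s / 2 < Real.tan (s / 2) :=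
    Real.lt_tan (by linarith) (by linarith)
  have hlb : l / 2 < β := by
    calc l / 2 = s * (s / 2) := by rw [← hss]; ring
    _ < s * Real.tan (s / 2) := by
        exact mul_lt_mul_of_pos_left htan_lb hs0
    _ = β := heq.symm
  have hl2 : l < 2 := by linarith
  have hs2 : s / 2 ≤ 1 := by
    nlinarith [hss, hs0]
  -- upper bound
  have htan_ub : Real.tan (s / 2) ≤ s / 2 + (s / 2) ^ 3 :=
    tan_le_cubic (by linarith) hs2
  have hub : β ≤ l / 2 + l ^ 2 / 8 := by
    calc β = s * Real.tan (s / 2) := heq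
    _ ≤ s * (s / 2 + (s / 2) ^ 3) :=
        mul_le_mul_of_nonneg_left htan_ub hs0.le
    _ = l / 2 + l ^ 2 / 8 := by
        have h4 : s ^ 4 = l ^ 2 := by nlinarith [hss]
        ring_nf
        nlinarith [hss, h4]
  have habs : |l - 2 * β| ≤ β ^ 2 := by
    rw [abs_le]
    constructor
    · nlinarith
    · nlinarith
  calc ‖l - 2 * β‖ = |l - 2 * β| := rfl
  _ ≤ β ^ 2 := habs
  _ = 1 * ‖β ^ 2‖ := by
      rw [one_mul, Real.norm_eq_abs, abs_of_nonneg (sq_nonneg β)]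
end

section
/- For every k ≥ 1 and β > 0, the derivative of the k-th Robin eigenvalue on (0,1) with respect to β satisfies 0 ≤ dλ_k/dβ ≤ 4. -/
open Real Set

lemma aux_inverse_deriv {a b : ℝ} {g m lamk : ℝ → ℝ}
    (hderiv : ∀ x ∈ Ioo a b, HasDerivAt g (m x) x)
    (hm : ∀ x ∈ Ioo a b, (1:ℝ)/4 ≤ m x)
    (hmem : ∀ β : ℝ, 0 < β → lamk β ∈ Ioo a b)
    (hinv : ∀ β : ℝ, 0 < β → g (lamk β) = β) :
    ∀ β : ℝ, 0 < β → 0 ≤ deriv lamk β ∧ deriv lamk β ≤ 4 := by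
  have hgm : StrictMonoOn g (Ioo a b) := by
    apply strictMonoOn_of_deriv_pos (convex_Ioo a b)
      (fun x hx => (hderiv x hx).continuousAt.continuousWithinAt)
    intro x hx
    rw [interior_Ioo] at hx
    rw [(hderiv x hx).deriv]
    linarith [hm x hx]
  have hlm : StrictMonoOn lamk (Ioi (0:ℝ)) := by
    intro x hx y hy hxy
    by_contra h
    push_neg at h
    have := hgm.monotoneOn (hmem y hy) (hmem x hx) h
    rw [hinv x hx, hinv y hy] at this
    linarith
  intro β hβ
  have hLI := hmem β hβ
  have hcont : ContinuousAt lamk β := by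
    apply hlm.continuousAt_of_exists_between (Ioi_mem_nhds hβ)
    · intro c hc
      have h2 : 0 < β/2 := by linarith
      have hmlt : lamk (β/2) < lamk β := hlm h2 hβ (by linarith)
      obtain ⟨l, hl1, hl2⟩ := exists_between (max_lt hc hmlt)
      have hlI : l ∈ Ioo a b := ⟨lt_trans (hmem _ h2).1 (lt_of_le_of_lt (le_max_right _ _) hl1),
        lt_trans hl2 hLI.2⟩
      have hgl : β/2 < g l := by
        have := hgm (hmem _ h2) hlI (lt_of_le_of_lt (le_max_right _ _) hl1)
        rwa [hinv _ h2] at this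
      have hgl0 : 0 < g l := by linarith
      refine ⟨g l, hgl0, ?_⟩
      have : lamk (g l) = l := by
        apply hgm.injOn (hmem _ hgl0) hlI
        rw [hinv _ hgl0]
      rw [this]
      exact ⟨le_of_lt (lt_of_le_of_lt (le_max_left _ _) hl1), hl2⟩
    · intro c hc
      have h2 : (0:ℝ) < β + 1 := by linarith
      have hmgt : lamk β < lamk (β+1) := hlm hβ h2 (by linarith)
      obtain ⟨l, hl1, hl2⟩ := exists_between (lt_min hc hmgt)
      have hlI : l ∈ Ioo a b := ⟨lt_trans hLI.1 hl1,
        lt_trans (lt_of_lt_of_le hl2 (min_le_right _ _)) (hmem _ h2).2⟩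
      have hgl : β < g l := by
        have := hgm hLI hlI hl1
        rwa [hinv _ hβ] at this
      have hgl0 : 0 < g l := by linarith
      refine ⟨g l, hgl0, ?_⟩
      have : lamk (g l) = l := by
        apply hgm.injOn (hmem _ hgl0) hlI
        rw [hinv _ hgl0]
      rw [this]
      exact ⟨hl1, le_of_lt (lt_of_lt_of_le hl2 (min_le_left _ _))⟩
  have hm0 : (1:ℝ)/4 ≤ m (lamk β) := hm _ hLI
  have hd : HasDerivAt lamk (m (lamk β))⁻¹ β := by
    apply HasDerivAt.of_local_left_inverse hcont (hderiv _ hLI) (by linarith)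
    filter_upwards [Ioi_mem_nhds hβ] with y hy
    exact hinv y hy
  rw [hd.deriv]
  constructor
  · positivity
  · rw [show (4:ℝ) = ((1:ℝ)/4)⁻¹ by norm_num]
    exact inv_anti₀ (by norm_num) hm0

lemma odd_facts (m : ℕ) (s : ℝ) (h1 : (m:ℝ)*π < s/2) (h2 : s/2 < (m:ℝ)*π + π/2) :
    Real.cos (s/2) ≠ 0 ∧ 0 < Real.tan (s/2) := by
  have hπ := Real.pi_pos
  constructor
  · rw [Real.cos_ne_zero_iff]
    intro n hn
    rw [hn] at h1 h2
    have hA : 2*(m:ℝ) < 2*(n:ℝ)+1 := by nlinarith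
    have hB : 2*(n:ℝ)+1 < 2*(m:ℝ)+1 := by nlinarith
    have hA' : 2*(m:ℤ) < 2*n+1 := by exact_mod_cast hA
    have hB' : 2*(n:ℤ)+1 < 2*(m:ℤ)+1 := by exact_mod_cast hB
    omega
  · have hp : Real.tan (s/2 - (m:ℝ)*π) = Real.tan (s/2) := Real.tan_periodic.sub_nat_mul_eq m
    rw [← hp]
    exact Real.tan_pos_of_pos_of_lt_pi_div_two (by linarith) (by linarith)

lemma even_facts (m : ℕ) (s : ℝ) (h1 : (m:ℝ)*π - π/2 < s/2) (h2 : s/2 < (m:ℝ)*π) :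
    Real.cos (s/2) ≠ 0 ∧ Real.tan (s/2) < 0 := by
  have hπ := Real.pi_pos
  constructor
  · rw [Real.cos_ne_zero_iff]
    intro n hn
    rw [hn] at h1 h2
    have hA : 2*(m:ℝ)-1 < 2*(n:ℝ)+1 := by nlinarith
    have hB : 2*(n:ℝ)+1 < 2*(m:ℝ) := by nlinarith
    have hA' : 2*(m:ℤ)-1 < 2*n+1 := by exact_mod_cast hA
    have hB' : 2*(n:ℤ)+1 < 2*(m:ℤ) := by exact_mod_cast hB
    omega
  · have hp : Real.tan (s/2 - (m:ℝ)*π) = Real.tan (s/2) := Real.tan_periodic.sub_nat_mul_eq m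
    rw [← hp]
    exact Real.tan_neg_of_neg_of_pi_div_two_lt (by linarith) (by linarith)

/-- for every k ≥ 1 and β > 0, the derivative of the k-th Robin
eigenvalue on (0,1) with respect to β satisfies 0 ≤ λ_k'(β) ≤ 4.
Here λ_k(β) is the unique solution in (π²(k-1)², π²k²) of
β = √λ tan(√λ/2) (k odd) resp. β = -√λ / tan(√λ/2) (k even). -/
theorem robin_eigenvalue_derivative_bounds
    (k : ℕ) (hk : 1 ≤ k) (lamk : ℝ → ℝ)
    (hmem : ∀ β : ℝ, 0 < β →
      lamk β ∈ Set.Ioo (Real.pi ^ 2 * ((k : ℝ) - 1) ^ 2) (Real.pi ^ 2 * (k : ℝ) ^ 2))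
    (heq : ∀ β : ℝ, 0 < β →
      if Odd k then β = Real.sqrt (lamk β) * Real.tan (Real.sqrt (lamk β) / 2)
      else β = -Real.sqrt (lamk β) / Real.tan (Real.sqrt (lamk β) / 2)) :
    ∀ β : ℝ, 0 < β → 0 ≤ deriv lamk β ∧ deriv lamk β ≤ 4 := by
  have hπ := Real.pi_pos
  have hk1 : (1:ℝ) ≤ (k:ℝ) := by exact_mod_cast hk
  -- generic bounds on sqrt
  have hsqrt : ∀ x ∈ Ioo (Real.pi ^ 2 * ((k : ℝ) - 1) ^ 2) (Real.pi ^ 2 * (k : ℝ) ^ 2),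
      0 < x ∧ π*((k:ℝ)-1) < Real.sqrt x ∧ Real.sqrt x < π*(k:ℝ) := by
    intro x hx
    have hx0 : 0 < x := lt_of_le_of_lt (by positivity) hx.1
    have e1 : Real.sqrt (Real.pi ^ 2 * ((k : ℝ) - 1) ^ 2) = π*((k:ℝ)-1) := by
      rw [show Real.pi ^ 2 * ((k : ℝ) - 1) ^ 2 = (π*((k:ℝ)-1))^2 by ring,
        Real.sqrt_sq (by nlinarith)]
    have e2 : Real.sqrt (Real.pi ^ 2 * (k : ℝ) ^ 2) = π*(k:ℝ) := by
      rw [show Real.pi ^ 2 * (k : ℝ) ^ 2 = (π*(k:ℝ))^2 by ring,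
        Real.sqrt_sq (by nlinarith)]
    refine ⟨hx0, ?_, ?_⟩
    · rw [← e1]; exact Real.sqrt_lt_sqrt (by positivity) hx.1
    · rw [← e2]; exact Real.sqrt_lt_sqrt (le_of_lt hx0) hx.2
  by_cases hodd : Odd k
  · obtain ⟨m, hkm⟩ := hodd
    have hkc : (k:ℝ) = 2*(m:ℝ)+1 := by rw [hkm]; push_cast; ring
    -- trig facts for x in the interval
    have key : ∀ x ∈ Ioo (Real.pi ^ 2 * ((k : ℝ) - 1) ^ 2) (Real.pi ^ 2 * (k : ℝ) ^ 2),
        0 < x ∧ Real.cos (Real.sqrt x / 2) ≠ 0 ∧ 0 < Real.tan (Real.sqrt x / 2) := by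
      intro x hx
      obtain ⟨hx0, hlb, hub⟩ := hsqrt x hx
      rw [hkc] at hlb hub
      have := odd_facts m (Real.sqrt x) (by linarith) (by linarith)
      exact ⟨hx0, this.1, this.2⟩
    apply aux_inverse_deriv
      (g := fun y => Real.sqrt y * Real.tan (Real.sqrt y / 2))
      (m := fun y => 1/(2*Real.sqrt y) * Real.tan (Real.sqrt y / 2) +
        Real.sqrt y * (1/Real.cos (Real.sqrt y / 2)^2 * (1/(2*Real.sqrt y)/2)))
      (a := Real.pi ^ 2 * ((k : ℝ) - 1) ^ 2) (b := Real.pi ^ 2 * (k : ℝ) ^ 2)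
    · intro x hx
      obtain ⟨hx0, hcos, htan⟩ := key x hx
      have h1 : HasDerivAt Real.sqrt (1/(2*Real.sqrt x)) x := Real.hasDerivAt_sqrt (ne_of_gt hx0)
      have h2 : HasDerivAt (fun y => Real.sqrt y / 2) (1/(2*Real.sqrt x)/2) x := h1.div_const 2
      have h3 : HasDerivAt (fun y => Real.tan (Real.sqrt y / 2))
          (1/Real.cos (Real.sqrt x / 2)^2 * (1/(2*Real.sqrt x)/2)) x :=
        by have := (Real.hasDerivAt_tan hcos).comp x h2; exact this
      exact h1.mul h3
    · intro x hx
      obtain ⟨hx0, hcos, htan⟩ := key x hx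
      set s := Real.sqrt x with hs
      have hs0 : 0 < s := Real.sqrt_pos.mpr hx0
      set c := Real.cos (s/2) with hc
      have hc2 : 0 < c^2 := by positivity
      have e : s * (1/c^2 * (1/(2*s)/2)) = 1/(4*c^2) := by
        field_simp
        ring
      have hb : (1:ℝ)/4 ≤ 1/(4*c^2) := by
        rw [div_le_div_iff₀ (by norm_num) (by positivity)]
        nlinarith [Real.cos_sq_le_one (s/2)]
      have hnn : 0 ≤ 1/(2*s) * Real.tan (s/2) := by positivity
      rw [e]
      linarith
    · exact hmem
    · intro β hβ
      have := heq β hβ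
      rw [if_pos ⟨m, hkm⟩] at this
      exact this.symm
  · have heven : Even k := Nat.not_odd_iff_even.mp hodd
    obtain ⟨m, hkm⟩ := heven
    have hkc : (k:ℝ) = 2*(m:ℝ) := by rw [hkm]; push_cast; ring
    have key : ∀ x ∈ Ioo (Real.pi ^ 2 * ((k : ℝ) - 1) ^ 2) (Real.pi ^ 2 * (k : ℝ) ^ 2),
        0 < x ∧ Real.cos (Real.sqrt x / 2) ≠ 0 ∧ Real.tan (Real.sqrt x / 2) < 0 := by
      intro x hx
      obtain ⟨hx0, hlb, hub⟩ := hsqrt x hx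
      rw [hkc] at hlb hub
      have := even_facts m (Real.sqrt x) (by linarith) (by linarith)
      exact ⟨hx0, this.1, this.2⟩
    apply aux_inverse_deriv
      (g := fun y => -Real.sqrt y / Real.tan (Real.sqrt y / 2))
      (m := fun y => (-(1/(2*Real.sqrt y)) * Real.tan (Real.sqrt y / 2) -
        (-Real.sqrt y) * (1/Real.cos (Real.sqrt y / 2)^2 * (1/(2*Real.sqrt y)/2))) /
        Real.tan (Real.sqrt y / 2)^2)
      (a := Real.pi ^ 2 * ((k : ℝ) - 1) ^ 2) (b := Real.pi ^ 2 * (k : ℝ) ^ 2)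
    · intro x hx
      obtain ⟨hx0, hcos, htan⟩ := key x hx
      have h1 : HasDerivAt Real.sqrt (1/(2*Real.sqrt x)) x := Real.hasDerivAt_sqrt (ne_of_gt hx0)
      have h2 : HasDerivAt (fun y => Real.sqrt y / 2) (1/(2*Real.sqrt x)/2) x := h1.div_const 2
      have h3 : HasDerivAt (fun y => Real.tan (Real.sqrt y / 2))
          (1/Real.cos (Real.sqrt x / 2)^2 * (1/(2*Real.sqrt x)/2)) x :=
        by have := (Real.hasDerivAt_tan hcos).comp x h2; exact this
      exact h1.neg.div h3 (ne_of_lt htan)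
    · intro x hx
      obtain ⟨hx0, hcos, htan⟩ := key x hx
      set s := Real.sqrt x with hs
      have hs0 : 0 < s := Real.sqrt_pos.mpr hx0
      set c := Real.cos (s/2) with hc
      set T := Real.tan (s/2) with hT
      have hc2 : 0 < c^2 := by positivity
      have hT2 : 0 < T^2 := by nlinarith
      have hsin : c^2 * T^2 ≤ 1 := by
        have hct : c * T = Real.sin (s/2) := by
          rw [hT, Real.tan_eq_sin_div_cos, ← hc]
          field_simp
        have h' : (c*T)^2 ≤ 1 := by rw [hct]; exact Real.sin_sq_le_one _
        nlinarith [h']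
      have e : (-s) * (1/c^2 * (1/(2*s)/2)) = -(1/(4*c^2)) := by
        field_simp
        ring
      rw [le_div_iff₀ hT2, e]
      have h1 : T^2/4 ≤ 1/(4*c^2) := by
        rw [div_le_div_iff₀ (by norm_num) (by positivity)]
        nlinarith
      have hq : 0 < 1/(2*s) := by positivity
      have h2 : 0 ≤ -(1/(2*s)) * T := by nlinarith
      linarith
    · exact hmem
    · intro β hβ
      have := heq β hβ
      rw [if_neg hodd] at this
      exact this.symm
end

section
/- For each k ≥ 1 and β > 0, the k-th eigenvalue λ_k of the Robin Laplacian on (0,1) satisfies (πk - 2 arctan(πk/β))² < λ_k < (πk - 2 arctan(π(k-1)/β))². -/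
open Real Set

/-- The set of eigenvalues of the Robin Laplacian on (0,1) with parameter `b > 0`,
characterized by the transcendental equation. -/
def RobinEV (b : ℝ) : Set ℝ :=
  {μ : ℝ | 0 < μ ∧
    2 * Real.sqrt μ * Real.cos (Real.sqrt μ)
      + (b - μ / b) * Real.sin (Real.sqrt μ) = 0}

/-- The auxiliary function `s ↦ s + 2 arctan (s / b)`. -/
noncomputable def Fb (b s : ℝ) : ℝ := s + 2 * Real.arctan (s / b)

lemma Fb_strictMono {b : ℝ} (hb : 0 < b) : StrictMono (Fb b) := by
  intro x y h
  have : Real.arctan (x / b) < Real.arctan (y / b) :=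
    Real.arctan_strictMono (by gcongr)
  unfold Fb; linarith

lemma Fb_continuous (b : ℝ) : Continuous (Fb b) :=
  continuous_id.add (continuous_const.mul (Real.continuous_arctan.comp (continuous_id.div_const b)))

lemma Fb_zero (b : ℝ) : Fb b 0 = 0 := by simp [Fb]

lemma exists_sRoot {b : ℝ} (hb : 0 < b) (m : ℕ) :
    ∃ s ∈ Icc (0:ℝ) (Real.pi * m), Fb b s = Real.pi * m := by
  have hm : (0:ℝ) ≤ Real.pi * m := by positivity
  have h1 : Real.pi * m ∈ Icc (Fb b 0) (Fb b (Real.pi * m)) := by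
    constructor
    · rw [Fb_zero]; exact hm
    · unfold Fb
      have : 0 ≤ Real.arctan (Real.pi * m / b) := by
        rw [← Real.arctan_zero]
        exact Real.arctan_strictMono.monotone (by positivity)
      linarith
  obtain ⟨s, hs, hfs⟩ := intermediate_value_Icc hm (Fb_continuous b).continuousOn h1
  exact ⟨s, hs, hfs⟩

/-- The unique solution of `Fb b s = π m`. -/
noncomputable def sRoot (b : ℝ) (hb : 0 < b) (m : ℕ) : ℝ := (exists_sRoot hb m).choose

lemma sRoot_eq {b : ℝ} (hb : 0 < b) (m : ℕ) : Fb b (sRoot b hb m) = Real.pi * m :=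
  (exists_sRoot hb m).choose_spec.2

lemma sRoot_lt {b : ℝ} (hb : 0 < b) {m : ℕ} (hm : 1 ≤ m) :
    sRoot b hb m < Real.pi * m := by
  have h := sRoot_eq hb m
  by_contra h'
  push_neg at h'
  have hm' : (1:ℝ) ≤ (m:ℝ) := by exact_mod_cast hm
  have hs : 0 < sRoot b hb m :=
    lt_of_lt_of_le (by nlinarith [Real.pi_pos]) h'
  have : 0 < Real.arctan (sRoot b hb m / b) := by
    rw [← Real.arctan_zero]; exact Real.arctan_strictMono (by positivity)
  unfold Fb at h; linarith

lemma sRoot_gt {b : ℝ} (hb : 0 < b) (m : ℕ) :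
    Real.pi * ((m : ℝ) - 1) < sRoot b hb m := by
  have h := sRoot_eq hb m
  have harct : Real.arctan (sRoot b hb m / b) < Real.pi / 2 := Real.arctan_lt_pi_div_two _
  unfold Fb at h
  nlinarith [Real.pi_pos]

lemma sRoot_pos {b : ℝ} (hb : 0 < b) {m : ℕ} (hm : 1 ≤ m) : 0 < sRoot b hb m := by
  have h := sRoot_gt hb m
  have hm' : (1:ℝ) ≤ (m:ℝ) := by exact_mod_cast hm
  nlinarith [Real.pi_pos]

lemma sRoot_strictMono {b : ℝ} (hb : 0 < b) {m n : ℕ} (h : m < n) :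
    sRoot b hb m < sRoot b hb n := by
  have hiff := (Fb_strictMono hb).lt_iff_lt (a := sRoot b hb m) (b := sRoot b hb n)
  rw [← hiff, sRoot_eq hb, sRoot_eq hb]
  have : (m:ℝ) < n := by exact_mod_cast h
  nlinarith [Real.pi_pos]

lemma sin_Fb {b : ℝ} (hb : 0 < b) (s : ℝ) :
    Real.sin (Fb b s) = ((b^2 - s^2) * Real.sin s + 2*b*s*Real.cos s) / (b^2 + s^2) := by
  have hb2 : (0:ℝ) < b^2 + s^2 := by positivity
  have h0 : (0:ℝ) < 1 + (s/b)^2 := by positivity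
  have h1 : Real.sqrt (1 + (s/b)^2) ^ 2 = 1 + (s/b)^2 := Real.sq_sqrt h0.le
  have h2 : Real.sqrt (1 + (s/b)^2) ≠ 0 := by positivity
  rw [Fb, Real.sin_add, Real.sin_two_mul, Real.cos_two_mul, Real.sin_arctan, Real.cos_arctan]
  field_simp
  have h1' : Real.sqrt ((b^2+s^2)/b^2) ^ 2 = (b^2+s^2)/b^2 := Real.sq_sqrt (by positivity)
  rw [h1']
  field_simp
  ring

lemma mem_RobinEV_iff_sin {b : ℝ} (hb : 0 < b) {s : ℝ} (hs : 0 < s) :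
    s ^ 2 ∈ RobinEV b ↔ Real.sin (Fb b s) = 0 := by
  have hsq : Real.sqrt (s ^ 2) = s := Real.sqrt_sq hs.le
  have hb2 : (0:ℝ) < b^2 + s^2 := by positivity
  rw [sin_Fb hb s, div_eq_zero_iff]
  constructor
  · rintro ⟨-, heq⟩
    rw [hsq] at heq
    left
    have hb' : b ≠ 0 := hb.ne'
    field_simp at heq ⊢
    nlinarith [heq]
  · rintro (heq | habs)
    · refine ⟨by positivity, ?_⟩
      rw [hsq]
      have hb' : b ≠ 0 := hb.ne'
      field_simp
      nlinarith [heq]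
    · exact absurd habs hb2.ne'

lemma RobinEV_eq_range {b : ℝ} (hb : 0 < b) :
    RobinEV b = Set.range (fun n : ℕ => (sRoot b hb (n+1)) ^ 2) := by
  ext μ
  constructor
  · intro hμ
    have hμpos : 0 < μ := hμ.1
    set s := Real.sqrt μ with hsdef
    have hs : 0 < s := Real.sqrt_pos.mpr hμpos
    have hμeq : μ = s ^ 2 := (Real.sq_sqrt hμpos.le).symm
    have hmem : s ^ 2 ∈ RobinEV b := hμeq ▸ hμ
    have hsin : Real.sin (Fb b s) = 0 := (mem_RobinEV_iff_sin hb hs).mp hmem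
    obtain ⟨n, hn⟩ := Real.sin_eq_zero_iff.mp hsin
    have hFpos : 0 < Fb b s := by
      have : 0 < Real.arctan (s / b) := by
        rw [← Real.arctan_zero]; exact Real.arctan_strictMono (by positivity)
      unfold Fb; linarith
    have hnpos : 0 < n := by
      by_contra h
      push_neg at h
      have : (n:ℝ) ≤ 0 := by exact_mod_cast h
      nlinarith [Real.pi_pos]
    set m := n.toNat with hmdef
    have hm1 : 1 ≤ m := by omega
    have hcast : (m : ℝ) = (n : ℝ) := by
      rw [hmdef]; exact_mod_cast Int.toNat_of_nonneg hnpos.le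
    have hFs : Fb b s = Real.pi * m := by rw [hcast]; linarith [hn]
    have : s = sRoot b hb m := by
      apply (Fb_strictMono hb).injective
      rw [hFs, sRoot_eq hb]
    refine ⟨m - 1, ?_⟩
    simp only
    rw [Nat.sub_add_cancel hm1, ← this, ← hμeq]
  · rintro ⟨n, rfl⟩
    simp only
    have hs : 0 < sRoot b hb (n+1) := sRoot_pos hb (by omega)
    rw [mem_RobinEV_iff_sin hb hs, sRoot_eq hb]
    have : Real.pi * ((n:ℕ)+1 : ℕ) = ((n+1 : ℕ) : ℝ) * Real.pi := by ring
    rw [this]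
    exact Real.sin_nat_mul_pi (n+1)

/-- for each k ≥ 1 and β > 0, the k-th Robin eigenvalue λ_k on (0,1)
satisfies (πk - 2 arctan(πk/β))² < λ_k < (πk - 2 arctan(π(k-1)/β))².
Here `lamseq` strictly increasingly enumerates the Robin eigenvalues,
`lamseq (k-1) = λ_k`. -/
theorem robin_eigenvalue_arctan_bounds
    (β : ℝ) (hβ : 0 < β) (lamseq : ℕ → ℝ)
    (hmono : StrictMono lamseq)
    (hmem : ∀ n, lamseq n ∈ RobinEV β)
    (hsurj : ∀ μ ∈ RobinEV β, ∃ n, lamseq n = μ)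
    (k : ℕ) (hk : 1 ≤ k) :
    (Real.pi * k - 2 * Real.arctan (Real.pi * k / β)) ^ 2 < lamseq (k - 1) ∧
      lamseq (k - 1) <
        (Real.pi * k - 2 * Real.arctan (Real.pi * ((k : ℝ) - 1) / β)) ^ 2 := by
  set g : ℕ → ℝ := fun n => (sRoot β hβ (n+1)) ^ 2 with hgdef
  have hgmono : StrictMono g := by
    intro m n h
    have h1 : 0 < sRoot β hβ (m+1) := sRoot_pos hβ (by omega)
    have h2 : sRoot β hβ (m+1) < sRoot β hβ (n+1) := sRoot_strictMono hβ (by omega)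
    simp only [hgdef]
    exact pow_lt_pow_left₀ h2 h1.le (by norm_num)
  have hrange : Set.range lamseq = Set.range g := by
    rw [← RobinEV_eq_range hβ]
    apply Set.Subset.antisymm
    · rintro μ ⟨n, rfl⟩; exact hmem n
    · intro μ hμ; obtain ⟨n, hn⟩ := hsurj μ hμ; exact ⟨n, hn⟩
  have heq : lamseq = g := (hmono.range_inj hgmono).mp hrange
  rw [heq]
  have hk1 : (k - 1) + 1 = k := Nat.succ_pred_eq_of_pos hk
  have hgk : g (k - 1) = (sRoot β hβ k) ^ 2 := by simp only [hgdef, hk1]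
  rw [hgk]
  set s := sRoot β hβ k with hsdef
  have hs_eq : s + 2 * Real.arctan (s / β) = Real.pi * k := sRoot_eq hβ k
  have hs_lt : s < Real.pi * k := sRoot_lt hβ hk
  have hs_gt : Real.pi * ((k:ℝ) - 1) < s := sRoot_gt hβ k
  have hs_pos : 0 < s := sRoot_pos hβ hk
  have hk1' : (1:ℝ) ≤ (k:ℝ) := by exact_mod_cast hk
  constructor
  · -- lower bound
    have h1 : Real.arctan (s / β) < Real.arctan (Real.pi * k / β) :=
      Real.arctan_strictMono (by gcongr)
    have h2 : Real.pi * k - 2 * Real.arctan (Real.pi * k / β) < s := by linarith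
    have h3 : 0 ≤ Real.pi * k - 2 * Real.arctan (Real.pi * k / β) := by
      have := Real.arctan_lt_pi_div_two (Real.pi * k / β)
      nlinarith [Real.pi_pos]
    exact pow_lt_pow_left₀ h2 h3 (by norm_num)
  · -- upper bound
    have h1 : Real.arctan (Real.pi * ((k:ℝ) - 1) / β) < Real.arctan (s / β) :=
      Real.arctan_strictMono (by gcongr)
    have h2 : s < Real.pi * k - 2 * Real.arctan (Real.pi * ((k:ℝ) - 1) / β) := by linarith
    exact pow_lt_pow_left₀ h2 hs_pos.le (by norm_num)
end

section
/- For γ ∈ (0,1], there is a constant C_γ > 0 such that for all β > 0 and λ > 0, |Σ_{k≥1} [(λ - (πk - 2arctan(πk/β))²)₊^γ - (λ - (πk - 2arctan(π(k-1)/β))²)₊^γ]| ≤ C_γ λ^{γ/2}. -/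
open Real Set
set_option maxHeartbeats 1000000

private noncomputable def rieszF (lam γ x : ℝ) : ℝ := (max (lam - x ^ 2) 0) ^ γ

private noncomputable def rieszA (β : ℝ) (k : ℕ) : ℝ :=
  Real.pi * (k + 1) - 2 * Real.arctan (Real.pi * (k + 1) / β)

private noncomputable def rieszB (β : ℝ) (k : ℕ) : ℝ :=
  Real.pi * (k + 1) - 2 * Real.arctan (Real.pi * (k : ℝ) / β)

private lemma riesz_concave_ineq {u v γ : ℝ} (hv : 0 < v) (hvu : v ≤ u)
    (hγ0 : 0 ≤ γ) (hγ1 : γ ≤ 1) :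
    u ^ γ - v ^ γ ≤ γ * v ^ (γ - 1) * (u - v) := by
  have hx : (0:ℝ) ≤ (u - v) / v := div_nonneg (by linarith) hv.le
  have hb : (1 + (u - v) / v) ^ γ ≤ 1 + γ * ((u - v) / v) :=
    rpow_one_add_le_one_add_mul_self (by linarith) hγ0 hγ1
  have h1 : u = v * (1 + (u - v) / v) := by field_simp; ring
  have h2 : u ^ γ = v ^ γ * (1 + (u - v) / v) ^ γ := by
    rw [← Real.mul_rpow hv.le (by linarith), ← h1]
  have h3 : u ^ γ ≤ v ^ γ * (1 + γ * ((u - v) / v)) := by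
    rw [h2]
    exact mul_le_mul_of_nonneg_left hb (Real.rpow_nonneg hv.le γ)
  have h4 : v ^ (γ - 1) = v ^ γ / v := by
    rw [Real.rpow_sub hv, Real.rpow_one]
  have h5 : v ^ γ * (1 + γ * ((u - v) / v)) = v ^ γ + γ * (v ^ γ / v) * (u - v) := by
    field_simp
  rw [h4]; rw [h5] at h3; linarith

private lemma riesz_key (γ : ℝ) (hγ0 : 0 < γ) (hγ1 : γ ≤ 1) (β : ℝ) (hβ : 0 < β)
    (lam : ℝ) (hlam : 0 < lam) :
    |∑' k : ℕ, (rieszF lam γ (rieszA β k) - rieszF lam γ (rieszB β k))|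
      ≤ 100 * lam ^ (γ / 2) := by
  classical
  have hπ : (0:ℝ) < π := Real.pi_pos
  set s := Real.sqrt lam with hs_def
  have hs : 0 < s := Real.sqrt_pos.mpr hlam
  have hlam_eq : s ^ 2 = lam := Real.sq_sqrt hlam.le
  set N : ℕ := ⌊s / π⌋₊ + 1 with hN_def
  -- basic facts about A and B
  have hA_lb : ∀ k : ℕ, π * k ≤ rieszA β k := by
    intro k
    have h := Real.arctan_lt_pi_div_two (π * (k + 1) / β)
    unfold rieszA; nlinarith
  have hA_nonneg : ∀ k : ℕ, 0 ≤ rieszA β k := by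
    intro k
    refine le_trans ?_ (hA_lb k)
    positivity
  have hAB : ∀ k : ℕ, rieszA β k ≤ rieszB β k := by
    intro k
    unfold rieszA rieszB
    have h : Real.arctan (π * (k : ℝ) / β) ≤ Real.arctan (π * (k + 1) / β) := by
      apply Real.arctan_strictMono.monotone
      gcongr
      linarith
    linarith
  have hB_ub : ∀ k : ℕ, rieszB β k ≤ π * (k + 1) := by
    intro k
    unfold rieszB
    have h0 : 0 ≤ Real.arctan (π * (k:ℝ) / β) := by
      rw [← Real.arctan_zero]
      exact Real.arctan_strictMono.monotone (by positivity)
    linarith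
  have hF_nonneg : ∀ x : ℝ, 0 ≤ rieszF lam γ x :=
    fun x => Real.rpow_nonneg (le_max_right _ _) γ
  have hF_anti : ∀ x y : ℝ, 0 ≤ x → x ≤ y → rieszF lam γ y ≤ rieszF lam γ x := by
    intro x y hx hxy
    unfold rieszF
    apply Real.rpow_le_rpow (le_max_right _ _) _ hγ0.le
    exact max_le_max (by nlinarith) le_rfl
  have hF_zero : ∀ x : ℝ, s ≤ x → rieszF lam γ x = 0 := by
    intro x hx
    unfold rieszF
    rw [max_eq_right (by nlinarith), Real.zero_rpow hγ0.ne']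
  have ht_nonneg : ∀ k : ℕ, 0 ≤ rieszF lam γ (rieszA β k) - rieszF lam γ (rieszB β k) :=
    fun k => sub_nonneg.2 (hF_anti _ _ (hA_nonneg k) (hAB k))
  have hNs : s < π * N := by
    have h1 : s / π < (N:ℝ) := by
      have := Nat.lt_floor_add_one (s / π)
      rw [hN_def]; push_cast; linarith
    have h2 := (div_lt_iff₀ hπ).mp h1
    nlinarith
  have hsupp : ∀ k : ℕ, k ∉ Finset.range N →
      rieszF lam γ (rieszA β k) - rieszF lam γ (rieszB β k) = 0 := by
    intro k hk
    have hkN : N ≤ k := by simpa using hk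
    have hkN' : (N:ℝ) ≤ (k:ℝ) := by exact_mod_cast hkN
    have h1 : s ≤ rieszA β k := by
      have h2 : π * (N:ℝ) ≤ π * (k:ℝ) := by nlinarith
      linarith [hA_lb k]
    rw [hF_zero _ h1, hF_zero _ (h1.trans (hAB k)), sub_zero]
  rw [tsum_eq_sum hsupp,
    abs_of_nonneg (Finset.sum_nonneg fun k _ => ht_nonneg k)]
  -- telescoping increments
  set c : ℕ → ℝ := fun k => 2 * Real.arctan (π * k / β) with hc_def
  have hδ : ∀ k : ℕ, rieszB β k - rieszA β k = c (k + 1) - c k := by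
    intro k
    unfold rieszA rieszB
    simp only [hc_def]
    push_cast
    ring
  have hδ_nonneg : ∀ k : ℕ, 0 ≤ c (k + 1) - c k := by
    intro k
    rw [← hδ k]
    linarith [hAB k]
  have hsum_c : ∑ k ∈ Finset.range N, (c (k + 1) - c k) ≤ π := by
    rw [Finset.sum_range_sub c]
    have h0 : c 0 = 0 := by simp [hc_def]
    have h1 : c N ≤ π := by
      have := Real.arctan_lt_pi_div_two (π * (N:ℝ) / β)
      simp only [hc_def]
      linarith
    linarith
  set Cb : ℝ := γ * (π * s) ^ (γ - 1) * (2 * s) with hCb_def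
  set E : ℝ := (4 * π * s) ^ γ with hE_def
  have hCb_nonneg : 0 ≤ Cb := by
    apply mul_nonneg (mul_nonneg hγ0.le (Real.rpow_nonneg (by positivity) _)) (by positivity)
  have hE_nonneg : 0 ≤ E := Real.rpow_nonneg (by positivity) γ
  have hterm : ∀ k ∈ Finset.range N,
      rieszF lam γ (rieszA β k) - rieszF lam γ (rieszB β k)
        ≤ Cb * (c (k + 1) - c k) + (if ((k:ℝ) + 2) * π ≤ s then 0 else E) := by
    intro k hk
    by_cases hcase : ((k:ℝ) + 2) * π ≤ s
    · rw [if_pos hcase, add_zero]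
      have hab : rieszA β k ≤ rieszB β k := hAB k
      have ha0 : 0 ≤ rieszA β k := hA_nonneg k
      set a := rieszA β k
      set b := rieszB β k
      have hk0 : (0:ℝ) ≤ (k:ℝ) := Nat.cast_nonneg k
      have h2π : 2 * π ≤ s := by nlinarith
      have hb_le : b ≤ s - π := by nlinarith [hB_ub k]
      have hv : π * s ≤ lam - b ^ 2 := by
        nlinarith [mul_self_le_mul_self (ha0.trans hab) hb_le]
      have hv0 : 0 < lam - b ^ 2 := lt_of_lt_of_le (by positivity) hv
      have hvu : lam - b ^ 2 ≤ lam - a ^ 2 := by nlinarith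
      have hconc := riesz_concave_ineq hv0 hvu hγ0.le hγ1
      have hvpow : (lam - b ^ 2) ^ (γ - 1) ≤ (π * s) ^ (γ - 1) :=
        rpow_le_rpow_of_nonpos (by positivity) hv (by linarith)
      have hdiff : (lam - a ^ 2) - (lam - b ^ 2) ≤ (c (k + 1) - c k) * (2 * s) := by
        rw [← hδ k]
        nlinarith [mul_nonneg (sub_nonneg.2 hab) (by linarith : (0:ℝ) ≤ 2 * s - (a + b))]
      have hd0 : 0 ≤ (lam - a ^ 2) - (lam - b ^ 2) := by linarith
      have hcomb : (lam - b ^ 2) ^ (γ - 1) * ((lam - a ^ 2) - (lam - b ^ 2))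
          ≤ (π * s) ^ (γ - 1) * ((c (k + 1) - c k) * (2 * s)) :=
        mul_le_mul hvpow hdiff hd0 (Real.rpow_nonneg (by positivity) _)
      have hmaxa : max (lam - a ^ 2) 0 = lam - a ^ 2 := max_eq_left (by linarith)
      have hmaxb : max (lam - b ^ 2) 0 = lam - b ^ 2 := max_eq_left (by linarith)
      show rieszF lam γ a - rieszF lam γ b ≤ _
      unfold rieszF
      rw [hmaxa, hmaxb]
      calc (lam - a ^ 2) ^ γ - (lam - b ^ 2) ^ γ
          ≤ γ * (lam - b ^ 2) ^ (γ - 1) * ((lam - a ^ 2) - (lam - b ^ 2)) := hconc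
        _ ≤ γ * ((π * s) ^ (γ - 1) * ((c (k + 1) - c k) * (2 * s))) := by
            rw [mul_assoc]; exact mul_le_mul_of_nonneg_left hcomb hγ0.le
        _ = Cb * (c (k + 1) - c k) := by rw [hCb_def]; ring
    · rw [if_neg hcase]
      have hks : s < ((k:ℝ) + 2) * π := lt_of_not_ge hcase
      have hFB : 0 ≤ rieszF lam γ (rieszB β k) := hF_nonneg _
      have hCbδ : 0 ≤ Cb * (c (k + 1) - c k) := mul_nonneg hCb_nonneg (hδ_nonneg k)
      have hFA : rieszF lam γ (rieszA β k) ≤ E := by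
        have hka : π * k ≤ rieszA β k := hA_lb k
        have ha0 : 0 ≤ rieszA β k := hA_nonneg k
        unfold rieszF
        rw [hE_def]
        apply Real.rpow_le_rpow (le_max_right _ _) _ hγ0.le
        apply max_le _ (by positivity)
        rcases le_or_gt (π * k) s with h | h
        · have hA2 : (π * (k:ℝ)) ^ 2 ≤ rieszA β k ^ 2 := by
            nlinarith [hka, (by positivity : (0:ℝ) ≤ π * (k:ℝ))]
          have hp : (s - π * (k:ℝ)) * (s + π * (k:ℝ)) ≤ (2 * π) * (2 * s) := by
            apply mul_le_mul (by nlinarith) (by linarith) (add_nonneg hs.le (by positivity)) (by positivity)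
          nlinarith [hA2, hp, hlam_eq]
        · have h1 : 0 ≤ rieszA β k - s := by linarith
          nlinarith [hlam_eq, mul_nonneg h1 (by linarith : (0:ℝ) ≤ rieszA β k + s)]
      linarith
  calc ∑ k ∈ Finset.range N, (rieszF lam γ (rieszA β k) - rieszF lam γ (rieszB β k))
      ≤ ∑ k ∈ Finset.range N,
          (Cb * (c (k + 1) - c k) + (if ((k:ℝ) + 2) * π ≤ s then 0 else E)) :=
        Finset.sum_le_sum hterm
    _ = Cb * ∑ k ∈ Finset.range N, (c (k + 1) - c k)
        + ∑ k ∈ Finset.range N, (if ((k:ℝ) + 2) * π ≤ s then 0 else E) := by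
        rw [Finset.sum_add_distrib, Finset.mul_sum]
    _ ≤ Cb * π + 2 * E := by
        have hsc : Cb * ∑ k ∈ Finset.range N, (c (k + 1) - c k) ≤ Cb * π :=
          mul_le_mul_of_nonneg_left hsum_c hCb_nonneg
        have hcard : (Finset.filter (fun k : ℕ => ¬ ((k:ℝ) + 2) * π ≤ s) (Finset.range N)).card ≤ 2 := by
          have hsub : Finset.filter (fun k : ℕ => ¬ ((k:ℝ) + 2) * π ≤ s) (Finset.range N)
              ⊆ Finset.Ico (N - 2) N := by
            intro k hk
            simp only [Finset.mem_filter, Finset.mem_range, not_le] at hk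
            obtain ⟨hk1, hk2⟩ := hk
            have hfl : ((N:ℝ) - 1) * π ≤ s := by
              have h1 : ((⌊s / π⌋₊ : ℕ) : ℝ) ≤ s / π := Nat.floor_le (by positivity)
              have h2 : ((N:ℝ) - 1) = ((⌊s / π⌋₊ : ℕ) : ℝ) := by
                rw [hN_def]; push_cast; ring
              rw [h2]
              calc ((⌊s / π⌋₊ : ℕ) : ℝ) * π ≤ (s / π) * π := by nlinarith
                _ = s := by field_simp
            have h3 : ((N:ℝ) - 1) < (k:ℝ) + 2 := by nlinarith
            have hNk : N < k + 3 := by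
              have : (N:ℝ) < (k:ℝ) + 3 := by linarith
              exact_mod_cast this
            simp only [Finset.mem_Ico]
            omega
          calc _ ≤ (Finset.Ico (N - 2) N).card := Finset.card_le_card hsub
            _ = N - (N - 2) := Nat.card_Ico _ _
            _ ≤ 2 := by omega
        have hite : ∑ k ∈ Finset.range N, (if ((k:ℝ) + 2) * π ≤ s then 0 else E) ≤ 2 * E := by
          rw [Finset.sum_ite, Finset.sum_const_zero, zero_add, Finset.sum_const, nsmul_eq_mul]
          have : ((Finset.filter (fun k : ℕ => ¬ ((k:ℝ) + 2) * π ≤ s) (Finset.range N)).card : ℝ) ≤ 2 := by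
            exact_mod_cast hcard
          exact mul_le_mul_of_nonneg_right this hE_nonneg
        linarith
    _ ≤ 100 * lam ^ (γ / 2) := by
        have hsγ : s ^ γ = lam ^ (γ / 2) := by
          rw [hs_def, Real.sqrt_eq_rpow, ← Real.rpow_mul hlam.le]
          congr 1
          ring
        have hπ1 : (1:ℝ) ≤ π := by linarith [Real.pi_gt_three]
        have hπγ : π ^ γ ≤ π := by
          calc π ^ γ ≤ π ^ (1:ℝ) := Real.rpow_le_rpow_of_exponent_le hπ1 hγ1
            _ = π := Real.rpow_one π
        have h4πγ : (4 * π) ^ γ ≤ 4 * π := by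
          calc (4 * π) ^ γ ≤ (4 * π) ^ (1:ℝ) :=
                Real.rpow_le_rpow_of_exponent_le (by linarith) hγ1
            _ = 4 * π := Real.rpow_one _
        have hCbπ : Cb * π = 2 * γ * (π ^ γ) * (s ^ γ) := by
          rw [hCb_def, Real.mul_rpow hπ.le hs.le]
          have e1 : π ^ (γ - 1) * π = π ^ γ := by
            rw [← Real.rpow_add_one hπ.ne' (γ - 1)]; ring_nf
          have e2 : s ^ (γ - 1) * s = s ^ γ := by
            rw [← Real.rpow_add_one hs.ne' (γ - 1)]; ring_nf
          calc γ * (π ^ (γ - 1) * s ^ (γ - 1)) * (2 * s) * π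
              = 2 * γ * (π ^ (γ - 1) * π) * (s ^ (γ - 1) * s) := by ring
            _ = 2 * γ * (π ^ γ) * (s ^ γ) := by rw [e1, e2]
        have hE_eq : E = (4 * π) ^ γ * s ^ γ := by
          rw [hE_def, ← Real.mul_rpow (by positivity) hs.le]
        have hsγ0 : 0 ≤ s ^ γ := Real.rpow_nonneg hs.le γ
        rw [← hsγ, hCbπ, hE_eq]
        have hπ4 : π ≤ 4 := Real.pi_le_four
        have hgπ : γ * π ^ γ ≤ π := by
          calc γ * π ^ γ ≤ 1 * π := mul_le_mul hγ1 hπγ (Real.rpow_nonneg hπ.le γ) one_pos.le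
            _ = π := one_mul π
        nlinarith [mul_le_mul_of_nonneg_right hgπ hsγ0,
          mul_le_mul_of_nonneg_right h4πγ hsγ0,
          mul_le_mul_of_nonneg_right hπ4 hsγ0]

/-- for γ ∈ (0,1] there is C_γ > 0 so that for all β > 0, λ > 0,
the sum over k ≥ 1 of the differences of the arctan-shifted Riesz summands is
bounded by C_γ λ^{γ/2}.  (x₊ = max x 0, and `k+1` ranges over the integers ≥ 1.) -/
theorem riesz_arctan_difference_bound
    (γ : ℝ) (hγ : γ ∈ Set.Ioc (0:ℝ) 1) :
    ∃ C : ℝ, 0 < C ∧ ∀ β : ℝ, 0 < β → ∀ lam : ℝ, 0 < lam →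
      |∑' k : ℕ,
          ((max (lam - (Real.pi * (k + 1)
              - 2 * Real.arctan (Real.pi * (k + 1) / β)) ^ 2) 0) ^ γ
            - (max (lam - (Real.pi * (k + 1)
              - 2 * Real.arctan (Real.pi * (k : ℝ) / β)) ^ 2) 0) ^ γ)|
        ≤ C * lam ^ (γ / 2) := by
  exact ⟨100, by norm_num, fun β hβ lam hlam => riesz_key γ hγ.1 hγ.2 β hβ lam hlam⟩
end

section
/- Fix γ ∈ (0,1] and M ≥ 2. There is a constant C_{γ,M} > 0 such that for all β > 0 and λ > 0, |Σ_{1 ≤ k ≤ √λ/π - M} k(λ - π²k²)^{γ-1} arctan(πk/β) - (λ^γ/π²) ∫₀¹ x(1-x²)^{γ-1} arctan(x√λ/β) dx| ≤ C_{γ,M} λ^{γ/2}. -/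
open Real Set intervalIntegral
open MeasureTheory

set_option maxHeartbeats 1000000

namespace ArctanSumAux

/-- The integrand `g x = x (1-x²)^{γ-1} arctan (c x)`. -/
noncomputable def g (γ c : ℝ) (x : ℝ) : ℝ := x * (1 - x ^ 2) ^ (γ - 1) * Real.arctan (x * c)

variable {γ c : ℝ}

lemma arctan_nonneg' {y : ℝ} (hy : 0 ≤ y) : 0 ≤ Real.arctan y := by
  have : Real.arctan 0 ≤ Real.arctan y := Real.arctan_strictMono.monotone hy
  simpa [Real.arctan_zero] using this

lemma g_nonneg (hc : 0 ≤ c) {x : ℝ} (hx0 : 0 ≤ x) (hx1 : x ≤ 1) : 0 ≤ g γ c x :=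
  mul_nonneg (mul_nonneg hx0 (Real.rpow_nonneg (by nlinarith) _))
    (arctan_nonneg' (mul_nonneg hx0 hc))

lemma g_le (hγ1 : γ ≤ 1) (hc : 0 ≤ c) {x : ℝ} (hx0 : 0 ≤ x) (hx1 : x ≤ 1) :
    g γ c x ≤ Real.pi / 2 * (1 - x) ^ (γ - 1) := by
  have h2 : (1 - x^2 : ℝ) ^ (γ - 1) = (1 - x) ^ (γ - 1) * (1 + x) ^ (γ - 1) := by
    rw [show (1 - x^2 : ℝ) = (1 - x) * (1 + x) by ring,
      Real.mul_rpow (by linarith) (by linarith)]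
  have h3 : (1 + x : ℝ) ^ (γ - 1) ≤ 1 :=
    Real.rpow_le_one_of_one_le_of_nonpos (by linarith) (by linarith)
  have h4 : Real.arctan (x * c) ≤ Real.pi / 2 := (Real.arctan_lt_pi_div_two _).le
  have h5 : (0:ℝ) ≤ (1 - x) ^ (γ - 1) := Real.rpow_nonneg (by linarith) _
  have h6 : (0:ℝ) ≤ (1 + x) ^ (γ - 1) := Real.rpow_nonneg (by linarith) _
  calc g γ c x = x * ((1 - x) ^ (γ - 1) * (1 + x) ^ (γ - 1)) * Real.arctan (x * c) := by
        rw [g, h2]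
    _ ≤ 1 * ((1 - x) ^ (γ - 1) * 1) * (Real.pi / 2) := by
        have hx' : x * ((1 - x) ^ (γ - 1) * (1 + x) ^ (γ - 1))
            ≤ 1 * ((1 - x) ^ (γ - 1) * 1) :=
          mul_le_mul hx1 (mul_le_mul_of_nonneg_left h3 h5) (mul_nonneg h5 h6) zero_le_one
        exact mul_le_mul hx' h4 (arctan_nonneg' (mul_nonneg hx0 hc)) (by simpa using h5)
    _ = Real.pi / 2 * (1 - x) ^ (γ - 1) := by ring

lemma g_mono (hγ1 : γ ≤ 1) (hc : 0 ≤ c) {a b : ℝ} (ha : 0 ≤ a) (hab : a ≤ b) (hb : b < 1) :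
    g γ c a ≤ g γ c b := by
  have hb0 : 0 ≤ b := ha.trans hab
  have hb2 : 0 < 1 - b ^ 2 := by nlinarith
  have h1 : (1 - a ^ 2 : ℝ) ^ (γ - 1) ≤ (1 - b ^ 2) ^ (γ - 1) :=
    Real.rpow_le_rpow_of_nonpos hb2 (by nlinarith) (by linarith)
  have h2 : a * (1 - a ^ 2) ^ (γ - 1) ≤ b * (1 - b ^ 2) ^ (γ - 1) :=
    mul_le_mul hab h1 (Real.rpow_nonneg (by nlinarith) _) hb0
  have h3 : Real.arctan (a * c) ≤ Real.arctan (b * c) :=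
    Real.arctan_strictMono.monotone (mul_le_mul_of_nonneg_right hab hc)
  exact mul_le_mul h2 h3 (arctan_nonneg' (mul_nonneg ha hc))
    (mul_nonneg hb0 (Real.rpow_nonneg hb2.le _))

lemma bound_intble (hγ : 0 < γ) (a b : ℝ) :
    IntervalIntegrable (fun x : ℝ => Real.pi / 2 * (1 - x) ^ (γ - 1)) volume a b := by
  have h : IntervalIntegrable (fun x : ℝ => x ^ (γ - 1)) volume (1 - a) (1 - b) :=
    intervalIntegral.intervalIntegrable_rpow' (by linarith)
  have h2 := h.comp_sub_left 1
  simp only [sub_sub_cancel] at h2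
  exact h2.const_mul _

lemma g_intble (hγ : 0 < γ) (hγ1 : γ ≤ 1) (hc : 0 ≤ c) {a b : ℝ}
    (ha : 0 ≤ a) (hab : a ≤ b) (hb : b ≤ 1) :
    IntervalIntegrable (g γ c) volume a b := by
  apply IntervalIntegrable.mono_fun' (bound_intble hγ a b)
  · have hcont : ContinuousOn (g γ c) (Ioo a b) := by
      apply ContinuousOn.mul
      · apply ContinuousOn.mul continuousOn_id
        apply ContinuousOn.rpow_const
        · exact (continuousOn_const.sub (continuousOn_id.pow 2))
        · intro x hx
          left
          have hx0 : 0 ≤ x := ha.trans hx.1.le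
          have hx1 : x < 1 := lt_of_lt_of_le hx.2 hb
          nlinarith
      · exact Real.continuous_arctan.comp_continuousOn (continuousOn_id.mul continuousOn_const)
    have h1 : AEStronglyMeasurable (g γ c) (volume.restrict (Ioo a b)) :=
      hcont.aestronglyMeasurable measurableSet_Ioo
    rw [uIoc_of_le hab, ← Measure.restrict_congr_set Ioo_ae_eq_Ioc]
    exact h1
  · rw [uIoc_of_le hab]
    filter_upwards [ae_restrict_mem measurableSet_Ioc] with x hx
    have hx0 : 0 ≤ x := ha.trans hx.1.le
    have hx1 : x ≤ 1 := hx.2.trans hb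
    rw [Real.norm_eq_abs, abs_of_nonneg (g_nonneg hc hx0 hx1)]
    exact g_le hγ1 hc hx0 hx1

lemma tail_bound (hγ : 0 < γ) (hγ1 : γ ≤ 1) (hc : 0 ≤ c) {a : ℝ} (ha : 0 ≤ a) (ha1 : a ≤ 1) :
    ∫ x in a..1, g γ c x ≤ Real.pi / 2 * (1 - a) ^ γ / γ := by
  have h1 : (∫ x in a..1, g γ c x) ≤ ∫ x in a..1, Real.pi / 2 * (1 - x) ^ (γ - 1) := by
    apply intervalIntegral.integral_mono_on ha1 (g_intble hγ hγ1 hc ha ha1 le_rfl)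
      (bound_intble hγ a 1)
    intro x hx
    exact g_le hγ1 hc (ha.trans hx.1) hx.2
  have h2 : (∫ x in a..1, Real.pi / 2 * (1 - x) ^ (γ - 1)) = Real.pi / 2 * (1 - a) ^ γ / γ := by
    rw [intervalIntegral.integral_const_mul]
    have h3 : (∫ x in a..1, (1 - x) ^ (γ - 1)) = ∫ x in ((1:ℝ) - 1)..(1 - a), x ^ (γ - 1) :=
      intervalIntegral.integral_comp_sub_left (fun x => x ^ (γ - 1)) 1
    rw [h3, sub_self, integral_rpow (Or.inl (by linarith)), sub_add_cancel,
      Real.zero_rpow hγ.ne', sub_zero]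
    ring
  linarith

lemma riemann (hγ : 0 < γ) (hγ1 : γ ≤ 1) (hc : 0 ≤ c) {h : ℝ} (hh : 0 < h) {n : ℕ}
    (hn1 : ((n:ℝ) + 1) * h < 1) :
    |h * (∑ i ∈ Finset.range n, g γ c (((i:ℝ) + 1) * h)) - ∫ x in (0:ℝ)..1, g γ c x|
      ≤ ∫ x in ((n:ℝ) * h)..1, g γ c x := by
  have hnh1 : (n:ℝ) * h < 1 := lt_of_le_of_lt (by nlinarith) hn1
  have hnh0 : 0 ≤ (n:ℝ) * h := by positivity
  set a : ℕ → ℝ := fun i => ((i:ℝ) + 1) * h with ha_def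
  set b : ℕ → ℝ := fun i => (i:ℝ) * h with hb_def
  have hav : ∀ i : ℕ, a i = ((i:ℝ) + 1) * h := fun i => rfl
  have hbv : ∀ i : ℕ, b i = (i:ℝ) * h := fun i => rfl
  have hav' : ∀ i : ℕ, a (i + 1) = ((i:ℝ) + 2) * h := by
    intro i; rw [hav]; push_cast; ring
  have hbv' : ∀ i : ℕ, b (i + 1) = ((i:ℝ) + 1) * h := by
    intro i; rw [hbv]; push_cast; ring
  have hInt : ∀ u v : ℝ, 0 ≤ u → u ≤ v → v ≤ 1 → IntervalIntegrable (g γ c) volume u v :=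
    fun u v h1 h2 h3 => g_intble hγ hγ1 hc h1 h2 h3
  -- upper Riemann estimate per step
  have step_up : ∀ i ∈ Finset.range n,
      h * g γ c (a i) ≤ ∫ x in (a i)..(a (i + 1)), g γ c x := by
    intro i hi
    have hi' : (i:ℝ) + 1 ≤ n := by exact_mod_cast Nat.succ_le_of_lt (Finset.mem_range.mp hi)
    have ha0 : 0 ≤ a i := by rw [hav]; positivity
    have hab : a i ≤ a (i + 1) := by rw [hav, hav']; nlinarith
    have hb1 : a (i + 1) < 1 := by rw [hav']; nlinarith
    have hconst : (∫ x in (a i)..(a (i + 1)), g γ c (a i)) = h * g γ c (a i) := by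
      rw [intervalIntegral.integral_const, smul_eq_mul, hav]; push_cast; ring
    rw [← hconst]
    apply intervalIntegral.integral_mono_on hab intervalIntegrable_const
      (hInt _ _ ha0 hab hb1.le)
    intro x hx
    exact g_mono hγ1 hc ha0 hx.1 (lt_of_le_of_lt hx.2 hb1)
  -- lower Riemann estimate per step
  have step_lo : ∀ i ∈ Finset.range n,
      (∫ x in (b i)..(b (i + 1)), g γ c x) ≤ h * g γ c (a i) := by
    intro i hi
    have hi' : (i:ℝ) + 1 ≤ n := by exact_mod_cast Nat.succ_le_of_lt (Finset.mem_range.mp hi)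
    have hbi1 : b (i + 1) = a i := by rw [hbv', hav]
    have hb0 : 0 ≤ b i := by rw [hbv]; positivity
    have hab : b i ≤ b (i + 1) := by rw [hbv, hbv']; nlinarith
    have hb1 : b (i + 1) < 1 := by rw [hbv']; nlinarith
    have hconst : (∫ x in (b i)..(b (i + 1)), g γ c (a i)) = h * g γ c (a i) := by
      rw [intervalIntegral.integral_const, smul_eq_mul, hbv]; push_cast; ring
    rw [← hconst]
    apply intervalIntegral.integral_mono_on hab (hInt _ _ hb0 hab hb1.le)
      intervalIntegrable_const
    intro x hx
    rw [← hbi1]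
    exact g_mono hγ1 hc (hb0.trans hx.1) hx.2 hb1
  -- telescoping sums
  have hint_a : ∀ i, i < n → IntervalIntegrable (g γ c) volume (a i) (a (i + 1)) := by
    intro i hi
    have hi' : (i:ℝ) + 1 ≤ n := by exact_mod_cast Nat.succ_le_of_lt hi
    exact hInt _ _ (by rw [hav]; positivity)
      (by rw [hav, hav']; nlinarith) (by rw [hav']; nlinarith)
  have hint_b : ∀ i, i < n → IntervalIntegrable (g γ c) volume (b i) (b (i + 1)) := by
    intro i hi
    have hi' : (i:ℝ) + 1 ≤ n := by exact_mod_cast Nat.succ_le_of_lt hi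
    exact hInt _ _ (by rw [hbv]; positivity)
      (by rw [hbv, hbv']; nlinarith) (by rw [hbv']; nlinarith)
  have tel_a : (∑ i ∈ Finset.range n, ∫ x in (a i)..(a (i + 1)), g γ c x)
      = ∫ x in (a 0)..(a n), g γ c x :=
    intervalIntegral.sum_integral_adjacent_intervals hint_a
  have tel_b : (∑ i ∈ Finset.range n, ∫ x in (b i)..(b (i + 1)), g γ c x)
      = ∫ x in (b 0)..(b n), g γ c x :=
    intervalIntegral.sum_integral_adjacent_intervals hint_b
  have ha0v : a 0 = h := by rw [hav]; push_cast; ring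
  have hanv : a n = ((n:ℝ) + 1) * h := hav n
  have hb0v : b 0 = 0 := by rw [hbv]; push_cast; ring
  have hbnv : b n = (n:ℝ) * h := hbv n
  rw [ha0v, hanv] at tel_a
  rw [hb0v, hbnv] at tel_b
  -- splitting the full integral
  have I1 : IntervalIntegrable (g γ c) volume 0 h := hInt _ _ le_rfl hh.le (by nlinarith)
  have I2 : IntervalIntegrable (g γ c) volume h (((n:ℝ)+1)*h) :=
    hInt _ _ hh.le (by nlinarith) hn1.le
  have I3 : IntervalIntegrable (g γ c) volume (((n:ℝ)+1)*h) 1 :=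
    hInt _ _ (by positivity) hn1.le le_rfl
  have I4 : IntervalIntegrable (g γ c) volume 0 ((n:ℝ)*h) := hInt _ _ le_rfl hnh0 hnh1.le
  have I5 : IntervalIntegrable (g γ c) volume ((n:ℝ)*h) 1 := hInt _ _ hnh0 hnh1.le le_rfl
  have split1 : (∫ x in (0:ℝ)..h, g γ c x) + (∫ x in h..(((n:ℝ)+1)*h), g γ c x)
      + (∫ x in (((n:ℝ)+1)*h)..1, g γ c x) = ∫ x in (0:ℝ)..1, g γ c x := by
    rw [intervalIntegral.integral_add_adjacent_intervals I1 I2,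
      intervalIntegral.integral_add_adjacent_intervals (I1.trans I2) I3]
  have split2 : (∫ x in (0:ℝ)..((n:ℝ)*h), g γ c x) + (∫ x in ((n:ℝ)*h)..1, g γ c x)
      = ∫ x in (0:ℝ)..1, g γ c x :=
    intervalIntegral.integral_add_adjacent_intervals I4 I5
  have nn : ∀ u v : ℝ, 0 ≤ u → u ≤ v → v ≤ 1 → 0 ≤ ∫ x in u..v, g γ c x := by
    intro u v h1 h2 h3
    apply intervalIntegral.integral_nonneg h2
    intro x hx
    exact g_nonneg hc (h1.trans hx.1) (hx.2.trans h3)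
  have nn1 : 0 ≤ ∫ x in (0:ℝ)..h, g γ c x := nn _ _ le_rfl hh.le (by nlinarith)
  have nn3 : 0 ≤ ∫ x in (((n:ℝ)+1)*h)..1, g γ c x := nn _ _ (by positivity) hn1.le le_rfl
  have nn5 : 0 ≤ ∫ x in ((n:ℝ)*h)..1, g γ c x := nn _ _ hnh0 hnh1.le le_rfl
  -- combine
  have hT : h * (∑ i ∈ Finset.range n, g γ c (((i:ℝ) + 1) * h))
      = ∑ i ∈ Finset.range n, h * g γ c (a i) := by
    rw [Finset.mul_sum]
  have up : h * (∑ i ∈ Finset.range n, g γ c (((i:ℝ) + 1) * h))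
      ≤ ∫ x in (0:ℝ)..1, g γ c x := by
    rw [hT]
    calc (∑ i ∈ Finset.range n, h * g γ c (a i))
        ≤ ∑ i ∈ Finset.range n, ∫ x in (a i)..(a (i + 1)), g γ c x :=
          Finset.sum_le_sum step_up
      _ = ∫ x in h..(((n:ℝ)+1)*h), g γ c x := tel_a
      _ ≤ ∫ x in (0:ℝ)..1, g γ c x := by linarith
  have lo : (∫ x in (0:ℝ)..1, g γ c x) - (∫ x in ((n:ℝ)*h)..1, g γ c x)
      ≤ h * (∑ i ∈ Finset.range n, g γ c (((i:ℝ) + 1) * h)) := by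
    rw [hT]
    calc (∫ x in (0:ℝ)..1, g γ c x) - (∫ x in ((n:ℝ)*h)..1, g γ c x)
        = ∫ x in (0:ℝ)..((n:ℝ)*h), g γ c x := by linarith
      _ = ∑ i ∈ Finset.range n, ∫ x in (b i)..(b (i + 1)), g γ c x := tel_b.symm
      _ ≤ ∑ i ∈ Finset.range n, h * g γ c (a i) := Finset.sum_le_sum step_lo
  rw [abs_le]
  constructor <;> linarith

end ArctanSumAux

open ArctanSumAux in

/-- for γ ∈ (0,1] and M ≥ 2 there is C_{γ,M} > 0 such that for all
β > 0, λ > 0 the Riemann-type sum Σ_{1 ≤ k ≤ √λ/π - M} k(λ-π²k²)^{γ-1} arctan(πk/β)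
differs from (λ^γ/π²)∫₀¹ x(1-x²)^{γ-1} arctan(x√λ/β) dx by at most C_{γ,M} λ^{γ/2}. -/
theorem arctan_sum_to_integral_estimate
    (γ M : ℝ) (hγ : γ ∈ Set.Ioc (0:ℝ) 1) (hM : 2 ≤ M) :
    ∃ C : ℝ, 0 < C ∧ ∀ β : ℝ, 0 < β → ∀ lam : ℝ, 0 < lam →
      |(∑ k ∈ Finset.Icc 1 ⌊Real.sqrt lam / Real.pi - M⌋₊,
          (k : ℝ) * (lam - Real.pi ^ 2 * (k : ℝ) ^ 2) ^ (γ - 1)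
            * Real.arctan (Real.pi * k / β))
        - lam ^ γ / Real.pi ^ 2
            * ∫ x in (0:ℝ)..1,
                x * (1 - x ^ 2) ^ (γ - 1) * Real.arctan (x * Real.sqrt lam / β)|
      ≤ C * lam ^ (γ / 2) := by
  obtain ⟨hγ0, hγ1⟩ := hγ
  have hπ := Real.pi_pos
  set C := ((M + 1) * Real.pi) ^ γ / (2 * γ * Real.pi) with hC_def
  have hCpos : 0 < C := by
    apply div_pos (Real.rpow_pos_of_pos (by nlinarith) γ) (by positivity)
  refine ⟨C, hCpos, ?_⟩
  intro β hβ lam hlam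
  set s := Real.sqrt lam with hs_def
  have hs : 0 < s := Real.sqrt_pos.mpr hlam
  have hs2 : s ^ 2 = lam := Real.sq_sqrt hlam.le
  set c := s / β with hc_def
  have hc : 0 ≤ c := by positivity
  have hlamγ : 0 < lam ^ γ := Real.rpow_pos_of_pos hlam γ
  have hsγ : s ^ γ = lam ^ (γ / 2) := by
    rw [hs_def, Real.sqrt_eq_rpow, ← Real.rpow_mul hlam.le, show (1/2) * γ = γ/2 by ring]
  have e1 : lam ^ γ = lam ^ (γ/2) * lam ^ (γ/2) := by
    rw [← Real.rpow_add hlam]; ring_nf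
  have hg_int : (∫ x in (0:ℝ)..1,
      x * (1 - x ^ 2) ^ (γ - 1) * Real.arctan (x * Real.sqrt lam / β))
      = ∫ x in (0:ℝ)..1, g γ c x := by
    apply intervalIntegral.integral_congr
    intro x _
    simp only [g, hc_def, ← hs_def, mul_div_assoc]
  have hI0 : 0 ≤ ∫ x in (0:ℝ)..1, g γ c x := by
    apply intervalIntegral.integral_nonneg zero_le_one
    intro x hx
    exact g_nonneg hc hx.1 hx.2
  set N := ⌊s / Real.pi - M⌋₊ with hN_def
  rcases Nat.eq_zero_or_pos N with hN0 | hN1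
  · -- small lambda : empty sum
    have hsmall : s < (M + 1) * Real.pi := by
      by_contra hcon
      push_neg at hcon
      have h1 : (1:ℝ) ≤ s / Real.pi - M := by
        rw [le_sub_iff_add_le, le_div_iff₀ hπ]
        linarith
      have h2 : 1 ≤ N := Nat.le_floor (by exact_mod_cast h1)
      omega
    have hsum0 : (∑ k ∈ Finset.Icc 1 N,
        (k : ℝ) * (lam - Real.pi ^ 2 * (k : ℝ) ^ 2) ^ (γ - 1)
          * Real.arctan (Real.pi * k / β)) = 0 := by
      rw [hN0]
      simp
    rw [hsum0, hg_int, zero_sub, abs_neg,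
      abs_of_nonneg (by positivity : (0:ℝ) ≤ lam ^ γ / Real.pi ^ 2 * ∫ x in (0:ℝ)..1, g γ c x)]
    have htb : (∫ x in (0:ℝ)..1, g γ c x) ≤ Real.pi / 2 * 1 / γ := by
      have := tail_bound hγ0 hγ1 hc (le_refl (0:ℝ)) zero_le_one
      rwa [sub_zero, Real.one_rpow] at this
    have hsgle : s ^ γ ≤ ((M + 1) * Real.pi) ^ γ :=
      Real.rpow_le_rpow hs.le hsmall.le hγ0.le
    calc lam ^ γ / Real.pi ^ 2 * ∫ x in (0:ℝ)..1, g γ c x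
        ≤ lam ^ γ / Real.pi ^ 2 * (Real.pi / 2 * 1 / γ) := by
          apply mul_le_mul_of_nonneg_left htb (by positivity)
      _ = lam ^ (γ/2) * (s ^ γ / (2 * γ * Real.pi)) := by
          rw [e1, ← hsγ]; field_simp
      _ ≤ lam ^ (γ/2) * (((M + 1) * Real.pi) ^ γ / (2 * γ * Real.pi)) := by
          gcongr
      _ = C * lam ^ (γ/2) := by rw [hC_def]; ring
  · -- main case
    have hge1 : (1:ℝ) ≤ s / Real.pi - M := by
      by_contra hcon
      push_neg at hcon
      have := Nat.floor_eq_zero.mpr hcon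
      omega
    have hfloor_le : (N:ℝ) ≤ s / Real.pi - M := Nat.floor_le (by linarith)
    have hfloor_gt : s / Real.pi - M < (N:ℝ) + 1 := Nat.lt_floor_add_one _
    set h : ℝ := Real.pi / s with hh_def
    have hh : 0 < h := by positivity
    have hn1 : ((N:ℝ) + 1) * h < 1 := by
      have h1 : (N:ℝ) + 1 ≤ s / Real.pi - 1 := by linarith
      have h2 : ((N:ℝ) + 1) * h ≤ (s / Real.pi - 1) * h :=
        mul_le_mul_of_nonneg_right h1 hh.le
      have h3 : (s / Real.pi - 1) * h = 1 - Real.pi / s := by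
        rw [hh_def]; field_simp
      rw [h3] at h2
      have : 0 < Real.pi / s := by positivity
      linarith
    have hnh1 : (N:ℝ) * h < 1 := by nlinarith
    have hnh0 : 0 ≤ (N:ℝ) * h := by positivity
    -- the sum identity
    have hterm : ∀ i ∈ Finset.range N,
        ((1 + i : ℕ) : ℝ) * (lam - Real.pi ^ 2 * ((1 + i : ℕ) : ℝ) ^ 2) ^ (γ - 1)
          * Real.arctan (Real.pi * ((1 + i : ℕ) : ℝ) / β)
        = lam ^ γ / (Real.pi * s) * g γ c (((i:ℝ) + 1) * h) := by
      intro i hi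
      have hiN : (1 + i : ℕ) ≤ N := by
        have := Finset.mem_range.mp hi; omega
      have hkcast : ((1 + i : ℕ) : ℝ) = (i:ℝ) + 1 := by push_cast; ring
      set k : ℝ := (i:ℝ) + 1 with hk_def
      have hk0 : 0 < k := by positivity
      have hkle : k ≤ s / Real.pi - M := by
        calc k = ((1 + i : ℕ) : ℝ) := hkcast.symm
          _ ≤ (N:ℝ) := by exact_mod_cast hiN
          _ ≤ s / Real.pi - M := hfloor_le
      have hπk : Real.pi * k ≤ s := by
        have h1 : Real.pi * k ≤ Real.pi * (s / Real.pi - M) :=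
          mul_le_mul_of_nonneg_left hkle hπ.le
        have h2 : Real.pi * (s / Real.pi - M) = s - Real.pi * M := by
          field_simp
        nlinarith
      have hlam_k : 0 ≤ lam - Real.pi ^ 2 * k ^ 2 := by
        have h1 : (Real.pi * k) ^ 2 ≤ s ^ 2 := by
          apply pow_le_pow_left₀ (by positivity) hπk
        nlinarith
      have e_arg : (k * h) * c = Real.pi * k / β := by
        rw [hh_def, hc_def]; field_simp
      have e_base : 1 - (k * h) ^ 2 = (lam - Real.pi ^ 2 * k ^ 2) / lam := by
        rw [hh_def, ← hs2]; field_simp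
      have e_rpow : ((lam - Real.pi ^ 2 * k ^ 2) / lam) ^ (γ - 1)
          = (lam - Real.pi ^ 2 * k ^ 2) ^ (γ - 1) * lam / lam ^ γ := by
        rw [Real.div_rpow hlam_k hlam.le, Real.rpow_sub hlam, Real.rpow_one]
        field_simp
      rw [hkcast, g, e_arg, e_base, e_rpow, hh_def,
        show lam = s ^ 2 from hs2.symm]
      field_simp
    have hsum : (∑ kk ∈ Finset.Icc 1 N,
        (kk : ℝ) * (lam - Real.pi ^ 2 * (kk : ℝ) ^ 2) ^ (γ - 1)
          * Real.arctan (Real.pi * kk / β))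
        = lam ^ γ / (Real.pi * s)
          * ∑ i ∈ Finset.range N, g γ c (((i:ℝ) + 1) * h) := by
      rw [← Finset.Ico_add_one_right_eq_Icc, Finset.sum_Ico_eq_sum_range]
      rw [Finset.mul_sum]
      exact Finset.sum_congr rfl hterm
    set T := ∑ i ∈ Finset.range N, g γ c (((i:ℝ) + 1) * h) with hT_def
    have hSI : (lam ^ γ / (Real.pi * s) * T)
        - lam ^ γ / Real.pi ^ 2 * ∫ x in (0:ℝ)..1, g γ c x
        = lam ^ γ / Real.pi ^ 2 * (h * T - ∫ x in (0:ℝ)..1, g γ c x) := by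
      rw [hh_def]; field_simp
    have hRie := riemann hγ0 hγ1 hc hh hn1 (n := N)
    have htail : (∫ x in ((N:ℝ) * h)..1, g γ c x)
        ≤ Real.pi / 2 * (1 - (N:ℝ) * h) ^ γ / γ :=
      tail_bound hγ0 hγ1 hc hnh0 hnh1.le
    have hgap : 1 - (N:ℝ) * h ≤ (M + 1) * Real.pi / s := by
      have h1 : s / Real.pi - M - 1 ≤ (N:ℝ) := by linarith
      have h2 : (s / Real.pi - M - 1) * h ≤ (N:ℝ) * h :=
        mul_le_mul_of_nonneg_right h1 hh.le
      have h3 : (s / Real.pi - M - 1) * h = 1 - (M + 1) * Real.pi / s := by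
        rw [hh_def]; field_simp; ring
      linarith
    have hgapγ : (1 - (N:ℝ) * h) ^ γ ≤ ((M + 1) * Real.pi) ^ γ / lam ^ (γ/2) := by
      have h1 : (1 - (N:ℝ) * h) ^ γ ≤ ((M + 1) * Real.pi / s) ^ γ :=
        Real.rpow_le_rpow (by linarith) hgap hγ0.le
      rwa [Real.div_rpow (by positivity) hs.le, hsγ] at h1
    rw [hg_int, hsum, hSI, abs_mul,
      abs_of_nonneg (by positivity : (0:ℝ) ≤ lam ^ γ / Real.pi ^ 2)]
    calc lam ^ γ / Real.pi ^ 2 * |h * T - ∫ x in (0:ℝ)..1, g γ c x|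
        ≤ lam ^ γ / Real.pi ^ 2 * (Real.pi / 2 * (1 - (N:ℝ) * h) ^ γ / γ) := by
          apply mul_le_mul_of_nonneg_left (hRie.trans htail) (by positivity)
      _ ≤ lam ^ γ / Real.pi ^ 2
            * (Real.pi / 2 * (((M + 1) * Real.pi) ^ γ / lam ^ (γ/2)) / γ) := by
          gcongr
      _ = C * lam ^ (γ/2) := by
          rw [hC_def, e1]
          have hl2 : (0:ℝ) < lam ^ (γ/2) := Real.rpow_pos_of_pos hlam _
          field_simp
end

section
/- For γ > 1 and any λ > 0 and β > 0, the following Aizenman–Lieb-type identity holds: γ(γ−1) ∫₀^λ (λ−τ)^{γ−2} L_{1,0}(β/√τ) τ dτ = L_{γ,0}(β/√λ) λ^γ, where L_{γ,0}(b) = (8/π)(γ)∫₀¹ x(1−x²)^{γ−1} arctan(x/b) dx − 1. -/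
open Real intervalIntegral Set

private lemma hcont_integrand (β : ℝ) :
    Continuous (fun y : ℝ => y * Real.arctan (y / β)) :=
  continuous_id.mul (Real.continuous_arctan.comp (continuous_id.div_const β))

private lemma hprim_cont (β : ℝ) :
    Continuous (fun s : ℝ => ∫ y in (0:ℝ)..s, y * Real.arctan (y / β)) :=
  intervalIntegral.continuous_primitive
    (fun a b => (hcont_integrand β).intervalIntegrable a b) 0

private lemma hprim_deriv (β : ℝ) (s : ℝ) :
    HasDerivAt (fun s : ℝ => ∫ y in (0:ℝ)..s, y * Real.arctan (y / β))
      (s * Real.arctan (s / β)) s :=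
  intervalIntegral.integral_hasDerivAt_right
    ((hcont_integrand β).intervalIntegrable 0 s)
    ((hcont_integrand β).stronglyMeasurable.stronglyMeasurableAtFilter)
    (hcont_integrand β).continuousAt

private lemma scale_lemma (β s : ℝ) (hs : 0 < s) :
    s ^ 2 * ∫ x in (0:ℝ)..1, x * Real.arctan (x * s / β)
      = ∫ y in (0:ℝ)..s, y * Real.arctan (y / β) := by
  have h := intervalIntegral.integral_comp_mul_right (a := (0:ℝ)) (b := 1)
      (fun y => y * Real.arctan (y / β)) hs.ne'
  simp only [zero_mul, one_mul, smul_eq_mul] at h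
  have h2 : (∫ x in (0:ℝ)..1, (x * s) * Real.arctan (x * s / β))
      = s * ∫ x in (0:ℝ)..1, x * Real.arctan (x * s / β) := by
    rw [← intervalIntegral.integral_const_mul]
    congr 1; ext x; ring
  rw [h2] at h
  have h3 : s * (s * ∫ x in (0:ℝ)..1, x * Real.arctan (x * s / β))
      = s * (s⁻¹ * ∫ y in (0:ℝ)..s, y * Real.arctan (y / β)) := by rw [h]
  rw [← mul_assoc, ← mul_assoc, mul_inv_cancel₀ hs.ne'] at h3
  linarith [h3]

/-- The coefficient L_{γ,0}(b) (with L^sc_{γ,0} = 1). -/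
noncomputable def Lz (γ b : ℝ) : ℝ :=
  (8 / Real.pi) * γ
      * (∫ x in (0:ℝ)..1, x * (1 - x ^ 2) ^ (γ - 1) * Real.arctan (x / b)) - 1

/-- the Aizenman–Lieb-type identity
γ(γ-1)∫₀^λ (λ-τ)^{γ-2} L_{1,0}(β/√τ) τ dτ = L_{γ,0}(β/√λ) λ^γ. -/
theorem aizenman_lieb_second_term
    (γ lam β : ℝ) (hγ : 1 < γ) (hlam : 0 < lam) (hβ : 0 < β) :
    γ * (γ - 1)
        * ∫ τ in (0:ℝ)..lam, (lam - τ) ^ (γ - 2) * Lz 1 (β / Real.sqrt τ) * τ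
      = Lz γ (β / Real.sqrt lam) * lam ^ γ := by
  set h : ℝ → ℝ := fun s => ∫ y in (0:ℝ)..s, y * Real.arctan (y / β) with hh
  set P : ℝ → ℝ := fun τ => (8 / Real.pi) * h (Real.sqrt τ) - τ with hP
  set Q : ℝ → ℝ := fun τ => (4 / Real.pi) * Real.arctan (Real.sqrt τ / β) - 1 with hQ
  have hγ0 : (0:ℝ) < γ := by linarith
  have hγ1 : (0:ℝ) < γ - 1 := by linarith
  have hPc : Continuous P :=
    (continuous_const.mul ((hprim_cont β).comp Real.continuous_sqrt)).sub continuous_id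
  have hQc : Continuous Q :=
    (continuous_const.mul (Real.continuous_arctan.comp
      (Real.continuous_sqrt.div_const β))).sub continuous_const
  have hu1 : Continuous (fun τ : ℝ => (lam - τ) ^ (γ - 1)) := by
    rw [continuous_iff_continuousAt]
    intro x
    exact (Real.continuousAt_rpow_const _ _ (Or.inr (by linarith))).comp
      ((continuous_const.sub continuous_id).continuousAt)
  have hGc : Continuous (fun τ : ℝ => (lam - τ) ^ (γ - 1)
      * Real.arctan (Real.sqrt τ / β)) :=
    hu1.mul (Real.continuous_arctan.comp (Real.continuous_sqrt.div_const β))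
  -- Step A: rewrite the integrand
  have hstep1 : EqOn (fun τ => (lam - τ) ^ (γ - 2) * Lz 1 (β / Real.sqrt τ) * τ)
      (fun τ => (lam - τ) ^ (γ - 2) * P τ) (uIcc (0:ℝ) lam) := by
    intro τ hτ
    rw [uIcc_of_le hlam.le] at hτ
    simp only
    rcases eq_or_lt_of_le hτ.1 with h0 | h0
    · simp [hP, ← h0, hh, Real.sqrt_zero]
    · have hsτ : 0 < Real.sqrt τ := Real.sqrt_pos.2 h0
      have hLz : Lz 1 (β / Real.sqrt τ) * τ = P τ := by
        have hsc := scale_lemma β (Real.sqrt τ) hsτ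
        rw [Real.sq_sqrt h0.le] at hsc
        simp only [Lz, show (1:ℝ) - 1 = 0 by norm_num, Real.rpow_zero, mul_one, one_mul,
          div_div_eq_mul_div, hP]
        rw [show h (Real.sqrt τ) = τ * ∫ x in (0:ℝ)..1,
          x * Real.arctan (x * Real.sqrt τ / β) from hsc.symm]
        ring
      rw [mul_assoc, hLz]
  rw [intervalIntegral.integral_congr hstep1]
  -- integrability facts
  have hint1 : IntervalIntegrable (fun τ : ℝ => (lam - τ) ^ (γ - 2))
      MeasureTheory.volume 0 lam := by
    have := (intervalIntegral.intervalIntegrable_rpow' (a := 0) (b := lam)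
      (r := γ - 2) (by linarith)).comp_sub_left lam
    simpa using this.symm
  have hintA : IntervalIntegrable (fun τ : ℝ => (lam - τ) ^ (γ - 2) * P τ)
      MeasureTheory.volume 0 lam := hint1.mul_continuousOn hPc.continuousOn
  have hintB : IntervalIntegrable (fun τ : ℝ => (lam - τ) ^ (γ - 1) * Q τ)
      MeasureTheory.volume 0 lam := ((hu1.mul hQc).continuousOn).intervalIntegrable
  -- Step B: integration by parts via FTC
  have key : (γ - 1) * ∫ τ in (0:ℝ)..lam, (lam - τ) ^ (γ - 2) * P τ
      = ∫ τ in (0:ℝ)..lam, (lam - τ) ^ (γ - 1) * Q τ := by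
    set F : ℝ → ℝ := fun τ => -((lam - τ) ^ (γ - 1) * P τ) with hF
    have hcontF : ContinuousOn F (Icc 0 lam) := ((hu1.mul hPc).neg).continuousOn
    have hderiv : ∀ τ ∈ Ioo (0:ℝ) lam, HasDerivAt F
        ((γ - 1) * ((lam - τ) ^ (γ - 2) * P τ) - (lam - τ) ^ (γ - 1) * Q τ) τ := by
      intro τ hτ
      have hτ0 : 0 < τ := hτ.1
      have hlt : 0 < lam - τ := by have := hτ.2; linarith
      have hsτ : Real.sqrt τ ≠ 0 := (Real.sqrt_pos.2 hτ0).ne'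
      have h1 : HasDerivAt (fun τ : ℝ => lam - τ) (-1) τ := (hasDerivAt_id τ).const_sub lam
      have h2 : HasDerivAt (fun τ : ℝ => (lam - τ) ^ (γ - 1))
          (-((γ - 1) * (lam - τ) ^ (γ - 2))) τ := by
        have h2' := (Real.hasDerivAt_rpow_const (x := lam - τ) (p := γ - 1)
          (Or.inl hlt.ne')).comp τ h1
        refine h2'.congr_deriv ?_
        rw [show γ - 1 - 1 = γ - 2 by ring]
        ring
      have h3 : HasDerivAt (fun τ : ℝ => h (Real.sqrt τ))
          (Real.arctan (Real.sqrt τ / β) / 2) τ := by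
        have h3' := (hprim_deriv β (Real.sqrt τ)).comp τ (Real.hasDerivAt_sqrt hτ0.ne')
        refine h3'.congr_deriv ?_
        field_simp
      have hP' : HasDerivAt P ((8 / Real.pi) * (Real.arctan (Real.sqrt τ / β) / 2) - 1) τ :=
        (h3.const_mul _).sub (hasDerivAt_id τ)
      have hprod := (h2.mul hP').neg
      refine hprod.congr_deriv ?_
      simp only [hQ]
      ring
    have hintFd : IntervalIntegrable (fun τ =>
        (γ - 1) * ((lam - τ) ^ (γ - 2) * P τ) - (lam - τ) ^ (γ - 1) * Q τ)
        MeasureTheory.volume 0 lam := (hintA.const_mul _).sub hintB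
    have hFTC := intervalIntegral.integral_eq_sub_of_hasDeriv_right_of_le hlam.le hcontF
      (fun τ hτ => (hderiv τ hτ).hasDerivWithinAt) hintFd
    have hF0 : F 0 = 0 := by
      simp [hF, hP, hh, Real.sqrt_zero]
    have hFlam : F lam = 0 := by
      simp [hF, Real.zero_rpow hγ1.ne']
    rw [hFlam, hF0, sub_zero] at hFTC
    rw [intervalIntegral.integral_sub (hintA.const_mul _) hintB,
      intervalIntegral.integral_const_mul] at hFTC
    linarith [hFTC]
  rw [mul_assoc, key]
  -- Step C: split the Q-integral
  have hsplit : (∫ τ in (0:ℝ)..lam, (lam - τ) ^ (γ - 1) * Q τ)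
      = (4 / Real.pi) * (∫ τ in (0:ℝ)..lam, (lam - τ) ^ (γ - 1)
            * Real.arctan (Real.sqrt τ / β))
        - ∫ τ in (0:ℝ)..lam, (lam - τ) ^ (γ - 1) := by
    have hcongr : EqOn (fun τ => (lam - τ) ^ (γ - 1) * Q τ)
        (fun τ => (4 / Real.pi) * ((lam - τ) ^ (γ - 1)
            * Real.arctan (Real.sqrt τ / β)) - (lam - τ) ^ (γ - 1)) (uIcc (0:ℝ) lam) := by
      intro τ _
      simp only [hQ]
      ring
    rw [intervalIntegral.integral_congr hcongr,
      intervalIntegral.integral_sub ((hGc.continuousOn.intervalIntegrable).const_mul _)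
        (hu1.continuousOn.intervalIntegrable),
      intervalIntegral.integral_const_mul]
  -- Step D: the elementary integral
  have hbase : (∫ τ in (0:ℝ)..lam, (lam - τ) ^ (γ - 1)) = lam ^ γ / γ := by
    rw [intervalIntegral.integral_comp_sub_left (fun x : ℝ => x ^ (γ - 1)) lam]
    simp only [sub_self, sub_zero]
    rw [integral_rpow (Or.inl (by linarith)), show γ - 1 + 1 = γ by ring,
      Real.zero_rpow hγ0.ne', sub_zero]
  -- Step E: substitution τ = lam * x^2
  have hsub : (∫ τ in (0:ℝ)..lam, (lam - τ) ^ (γ - 1) * Real.arctan (Real.sqrt τ / β))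
      = 2 * lam ^ γ * ∫ x in (0:ℝ)..1,
          x * (1 - x ^ 2) ^ (γ - 1) * Real.arctan (x * Real.sqrt lam / β) := by
    have hφ : ∀ x ∈ uIcc (0:ℝ) 1, HasDerivAt (fun x : ℝ => lam * x ^ 2)
        (lam * (2 * x)) x := by
      intro x _
      simpa using (hasDerivAt_pow 2 x).const_mul lam
    have hcv := intervalIntegral.integral_comp_smul_deriv hφ
      ((continuous_const.mul (continuous_const.mul continuous_id)).continuousOn) hGc
    norm_num [smul_eq_mul, Function.comp] at hcv
    rw [← hcv]
    have hlamg : lam ^ γ = lam * lam ^ (γ - 1) := by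
      rw [show γ = 1 + (γ - 1) by ring, Real.rpow_add hlam, Real.rpow_one,
        show 1 + (γ - 1) - 1 = γ - 1 by ring]
    have hcongr2 : EqOn
        (fun x : ℝ => lam * (2 * x) * ((lam - lam * x ^ 2) ^ (γ - 1)
            * Real.arctan (Real.sqrt (lam * x ^ 2) / β)))
        (fun x : ℝ => (2 * lam ^ γ) * (x * (1 - x ^ 2) ^ (γ - 1)
            * Real.arctan (x * Real.sqrt lam / β))) (uIcc (0:ℝ) 1) := by
      intro x hx
      rw [uIcc_of_le (by norm_num : (0:ℝ) ≤ 1)] at hx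
      have hx0 : 0 ≤ x := hx.1
      have hx1 : x ≤ 1 := hx.2
      simp only
      rw [Real.sqrt_mul hlam.le, Real.sqrt_sq hx0,
        show lam - lam * x ^ 2 = lam * (1 - x ^ 2) by ring,
        Real.mul_rpow hlam.le (by nlinarith : (0:ℝ) ≤ 1 - x ^ 2),
        show Real.sqrt lam * x = x * Real.sqrt lam by ring, hlamg]
      ring
    rw [intervalIntegral.integral_congr hcongr2, intervalIntegral.integral_const_mul]
  rw [hsplit, hsub, hbase]
  -- Final assembly
  have hLzγ : Lz γ (β / Real.sqrt lam)
      = (8 / Real.pi) * γ * (∫ x in (0:ℝ)..1,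
          x * (1 - x ^ 2) ^ (γ - 1) * Real.arctan (x * Real.sqrt lam / β)) - 1 := by
    simp only [Lz, div_div_eq_mul_div]
  rw [hLzγ]
  generalize (∫ x in (0:ℝ)..1,
      x * (1 - x ^ 2) ^ (γ - 1) * Real.arctan (x * Real.sqrt lam / β)) = I
  field_simp
  ring
end

section
/- For γ > 1, β > 0, λ > 0: (γ−1) ∫₀^λ τ(λ−τ)^{γ−2} ∫₀¹ x arctan(x√τ/β) dx dτ = λ^γ ∫₀¹ x(1−x²)^{γ−1} arctan(x√λ/β) dx. -/
open Real intervalIntegral MeasureTheory Set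



lemma sq_subst (c : ℝ) (g : ℝ → ℝ) (hg : Continuous g) :
    ∫ σ in (0:ℝ)..c, g σ = ∫ x in (0:ℝ)..1, (2 * c * x) * g (c * x ^ 2) := by
  have h := integral_comp_smul_deriv (a := (0:ℝ)) (b := 1)
      (f := fun x => c * x ^ 2) (f' := fun x => 2 * c * x) (g := g)
      (fun x _ => by
        simpa using (((hasDerivAt_pow 2 x).const_mul c).congr_deriv (by ring)))
      (by fun_prop) hg
  simp only [smul_eq_mul, Function.comp] at h
  norm_num at h
  rw [h]

noncomputable def hfun (β σ : ℝ) : ℝ := Real.arctan (Real.sqrt σ / β) / 2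

noncomputable def Hfun (β t : ℝ) : ℝ := ∫ σ in (0:ℝ)..t, hfun β σ

lemma hfun_cont (β : ℝ) : Continuous (hfun β) := by
  exact (Real.continuous_arctan.comp (Real.continuous_sqrt.div_const β)).div_const 2

lemma Hfun_hasDeriv (β t : ℝ) : HasDerivAt (Hfun β) (hfun β t) t := by
  exact intervalIntegral.integral_hasDerivAt_right
    ((hfun_cont β).intervalIntegrable _ _)
    ((hfun_cont β).stronglyMeasurableAtFilter _ _)
    (hfun_cont β).continuousAt

lemma Hfun_cont (β : ℝ) : Continuous (Hfun β) :=
  continuous_iff_continuousAt.2 fun t => (Hfun_hasDeriv β t).continuousAt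

lemma Hfun_zero (β : ℝ) : Hfun β 0 = 0 := by
  simp [Hfun]

lemma key (γ lam β : ℝ) (hγ : 1 < γ) (hlam : 0 < lam) :
    (γ - 1) * ∫ τ in (0:ℝ)..lam, (lam - τ) ^ (γ - 2) * Hfun β τ
      = ∫ τ in (0:ℝ)..lam, (lam - τ) ^ (γ - 1) * hfun β τ := by
  set f : ℝ → ℝ := fun t => (lam - t) ^ (γ - 1) * Hfun β t with hf
  set f1 : ℝ → ℝ := fun t => -((γ - 1) * ((lam - t) ^ (γ - 2) * Hfun β t)) with hf1
  set f2 : ℝ → ℝ := fun t => (lam - t) ^ (γ - 1) * hfun β t with hf2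
  have hcont1 : Continuous fun t : ℝ => (lam - t) ^ (γ - 1) :=
    (Real.continuous_rpow_const (by linarith)).comp (continuous_const.sub continuous_id)
  have hint1 : IntervalIntegrable f1 volume 0 lam := by
    have hbase : IntervalIntegrable (fun t : ℝ => (lam - t) ^ (γ - 2)) volume 0 lam := by
      have := (intervalIntegral.intervalIntegrable_rpow' (a := 0) (b := lam)
        (r := γ - 2) (by linarith)).comp_sub_left lam
      simpa using this.symm
    exact ((hbase.mul_continuousOn (Hfun_cont β).continuousOn).const_mul (γ - 1)).neg
  have hint2 : IntervalIntegrable f2 volume 0 lam :=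
    (hcont1.mul (hfun_cont β)).intervalIntegrable _ _
  have hderiv : ∀ t ∈ Ioo (0:ℝ) lam, HasDerivAt f (f1 t + f2 t) t := by
    intro t ht
    have h1 : HasDerivAt (fun t : ℝ => (lam - t) ^ (γ - 1))
        (-((γ - 1) * (lam - t) ^ (γ - 2))) t := by
      have hb : lam - t ≠ 0 := by have := ht.2; intro h; linarith [sub_eq_zero.mp h]
      have := (Real.hasDerivAt_rpow_const (x := lam - t) (p := γ - 1) (Or.inl hb)).comp t
        ((hasDerivAt_id t).const_sub lam)
      refine this.congr_deriv ?_
      rw [show γ - 1 - 1 = γ - 2 by ring]; ring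
    have := h1.mul (Hfun_hasDeriv β t)
    refine this.congr_deriv ?_
    simp only [hf1, hf2]
    ring
  have hFTC := intervalIntegral.integral_eq_sub_of_hasDerivAt_of_le hlam.le
    (hcont1.mul (Hfun_cont β)).continuousOn hderiv (hint1.add hint2)
  rw [intervalIntegral.integral_add hint1 hint2] at hFTC
  simp only [Pi.mul_apply] at hFTC
  rw [show lam - lam = (0:ℝ) by ring,
    Real.zero_rpow (by intro h; linarith [h] : γ - 1 ≠ 0), Hfun_zero] at hFTC
  simp only [zero_mul, mul_zero, sub_zero] at hFTC
  have hneg : ∫ τ in (0:ℝ)..lam, f1 τ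
      = -((γ - 1) * ∫ τ in (0:ℝ)..lam, (lam - τ) ^ (γ - 2) * Hfun β τ) := by
    simp only [hf1]
    rw [intervalIntegral.integral_neg, intervalIntegral.integral_const_mul]
  rw [hneg] at hFTC
  linarith [hFTC]

/-- for γ > 1, β > 0, λ > 0,
(γ-1)∫₀^λ τ(λ-τ)^{γ-2} ∫₀¹ x arctan(x√τ/β) dx dτ
  = λ^γ ∫₀¹ x(1-x²)^{γ-1} arctan(x√λ/β) dx. -/
theorem double_integral_lifting_identity
    (γ lam β : ℝ) (hγ : 1 < γ) (hlam : 0 < lam) (hβ : 0 < β) :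
    (γ - 1) * ∫ τ in (0:ℝ)..lam,
        τ * (lam - τ) ^ (γ - 2)
          * ∫ x in (0:ℝ)..1, x * Real.arctan (x * Real.sqrt τ / β)
      = lam ^ γ * ∫ x in (0:ℝ)..1,
          x * (1 - x ^ 2) ^ (γ - 1) * Real.arctan (x * Real.sqrt lam / β) := by
  -- Step 1 : rewrite the inner integral using Hfun
  have hinner : ∀ τ : ℝ, 0 ≤ τ →
      Hfun β τ = τ * ∫ x in (0:ℝ)..1, x * Real.arctan (x * Real.sqrt τ / β) := by
    intro τ hτ
    have h1 : Hfun β τ = ∫ x in (0:ℝ)..1, (2 * τ * x) * hfun β (τ * x ^ 2) :=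
      sq_subst τ (hfun β) (hfun_cont β)
    have h2 : EqOn (fun x : ℝ => (2 * τ * x) * hfun β (τ * x ^ 2))
        (fun x : ℝ => τ * (x * Real.arctan (x * Real.sqrt τ / β))) (Set.uIcc 0 1) := by
      intro x hx
      rw [Set.uIcc_of_le (by norm_num)] at hx
      have hx0 : (0:ℝ) ≤ x := hx.1
      simp only [hfun]
      rw [show τ * x ^ 2 = τ * x ^ 2 by ring, Real.sqrt_mul hτ,
        Real.sqrt_sq hx0]
      rw [show Real.sqrt τ * x = x * Real.sqrt τ by ring]
      ring
    rw [h1, intervalIntegral.integral_congr h2, intervalIntegral.integral_const_mul]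
  have hLHS : (∫ τ in (0:ℝ)..lam,
        τ * (lam - τ) ^ (γ - 2)
          * ∫ x in (0:ℝ)..1, x * Real.arctan (x * Real.sqrt τ / β))
      = ∫ τ in (0:ℝ)..lam, (lam - τ) ^ (γ - 2) * Hfun β τ := by
    apply intervalIntegral.integral_congr
    intro τ hτ
    rw [Set.uIcc_of_le hlam.le] at hτ
    have := hinner τ hτ.1
    simp only []
    rw [this]
    ring
  -- Step 2 : rewrite the RHS integral
  have hg : Continuous (fun σ : ℝ => (lam - σ) ^ (γ - 1) * hfun β σ) :=
    ((Real.continuous_rpow_const (by linarith)).comp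
      (continuous_const.sub continuous_id)).mul (hfun_cont β)
  have hR1 : (∫ σ in (0:ℝ)..lam, (lam - σ) ^ (γ - 1) * hfun β σ)
      = ∫ x in (0:ℝ)..1,
          (2 * lam * x) * ((lam - lam * x ^ 2) ^ (γ - 1) * hfun β (lam * x ^ 2)) :=
    sq_subst lam _ hg
  have hR2 : EqOn
      (fun x : ℝ => (2 * lam * x) * ((lam - lam * x ^ 2) ^ (γ - 1) * hfun β (lam * x ^ 2)))
      (fun x : ℝ => lam ^ γ * (x * (1 - x ^ 2) ^ (γ - 1)
        * Real.arctan (x * Real.sqrt lam / β))) (Set.uIcc 0 1) := by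
    intro x hx
    rw [Set.uIcc_of_le (by norm_num)] at hx
    have hx0 : (0:ℝ) ≤ x := hx.1
    have hx1 : x ≤ 1 := hx.2
    have h1x : (0:ℝ) ≤ 1 - x ^ 2 := by nlinarith
    simp only [hfun]
    rw [Real.sqrt_mul hlam.le, Real.sqrt_sq hx0,
      show lam - lam * x ^ 2 = lam * (1 - x ^ 2) by ring,
      Real.mul_rpow hlam.le h1x,
      show Real.sqrt lam * x = x * Real.sqrt lam by ring,
      show γ = 1 + (γ - 1) by ring, Real.rpow_add hlam, Real.rpow_one]
    ring_nf
  have hRHS : (∫ σ in (0:ℝ)..lam, (lam - σ) ^ (γ - 1) * hfun β σ)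
      = lam ^ γ * ∫ x in (0:ℝ)..1,
          x * (1 - x ^ 2) ^ (γ - 1) * Real.arctan (x * Real.sqrt lam / β) := by
    rw [hR1, intervalIntegral.integral_congr hR2, intervalIntegral.integral_const_mul]
  rw [hLHS, key γ lam β hγ hlam, hRHS]
end

section
/- For d = 1 and γ = 0 the Berezin–Li–Yau-type bound fails for all Robin parameters: for every β > 0 there exists λ > 0 such that the counting function of the Robin Laplacian on (0,1) with parameter β√λ satisfies Tr(−Δ^{β√λ}_{(0,1)} − λ)₋^0 > √λ/π. -/
open Real

/-- for d = 1 and γ = 0 the Berezin–Li–Yau-type bound fails for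
all Robin parameters: for every β > 0 there is λ > 0 with
#{eigenvalues of -Δ^{β√λ}_{(0,1)} that are ≤ λ} > √λ/π. -/
theorem counting_bound_fails_one_dim :
    ∀ β : ℝ, 0 < β → ∃ lam : ℝ, 0 < lam ∧
      Real.sqrt lam / Real.pi <
        (({μ ∈ RobinEV (β * Real.sqrt lam) | μ ≤ lam}).ncard : ℝ) := by
  intro β hβ
  -- the "endpoint" function F s = 2 cos s + (β - 1/β) sin s; F π = -2
  set F : ℝ → ℝ := fun s => 2 * Real.cos s + (β - 1 / β) * Real.sin s with hF
  have hFcont : Continuous F := by fun_prop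
  have hFpi : F π = -2 := by simp [hF]
  -- choose s ∈ (π/2, π) with F s < 0
  obtain ⟨s, hs⟩ : ∃ s, (F s < 0 ∧ s ∈ Set.Ioo (π / 2) π) := by
    have h1 : ∀ᶠ x in nhdsWithin π (Set.Iio π), F x < 0 := by
      have : Filter.Tendsto F (nhdsWithin π (Set.Iio π)) (nhds (-2)) := by
        rw [← hFpi]
        exact (hFcont.continuousAt).continuousWithinAt.tendsto
      exact this.eventually_lt_const (by norm_num)
    have h2 : Set.Ioo (π / 2) π ∈ nhdsWithin π (Set.Iio π) :=
      Ioo_mem_nhdsLT_of_mem ⟨by linarith [Real.pi_pos], le_refl π⟩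
    exact (h1.and (Filter.eventually_of_mem h2 (fun x hx => hx))).exists
  obtain ⟨hFs, hs2, hsπ⟩ := hs
  have hs0 : 0 < s := lt_trans (by positivity) hs2
  set b : ℝ := β * s with hb
  have hb0 : 0 < b := mul_pos hβ hs0
  refine ⟨s ^ 2, by positivity, ?_⟩
  have hsqrt : Real.sqrt (s ^ 2) = s := Real.sqrt_sq hs0.le
  rw [hsqrt]
  -- the secular function
  set h : ℝ → ℝ := fun t => 2 * t * Real.cos t + (b - t ^ 2 / b) * Real.sin t with hh
  have hhcont : Continuous h := by fun_prop
  have hhanal : AnalyticOnNhd ℝ h Set.univ := by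
    have : ContDiff ℝ (⊤ : WithTop ℕ∞) h := by
      apply ContDiff.add
      · exact (contDiff_const.mul contDiff_id).mul Real.contDiff_cos
      · exact (contDiff_const.sub ((contDiff_id.pow 2).div_const b)).mul Real.contDiff_sin
    exact this.analyticOnNhd
  -- a point where h is positive
  set m : ℝ := min s (min b 1) with hm
  have hm0 : 0 < m := lt_min hs0 (lt_min hb0 one_pos)
  set t₁ : ℝ := m / 2 with ht₁
  have ht₁0 : 0 < t₁ := by positivity
  have ht₁s : t₁ < s := lt_of_lt_of_le (by linarith) (min_le_left _ _)
  have ht₁b : t₁ < b := lt_of_lt_of_le (by linarith) (le_trans (min_le_right _ _) (min_le_left _ _))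
  have ht₁1 : t₁ < 1 := lt_of_lt_of_le (by linarith) (le_trans (min_le_right _ _) (min_le_right _ _))
  have hcos1 : 0 < Real.cos t₁ := by
    apply Real.cos_pos_of_mem_Ioo
    constructor
    · linarith [Real.pi_gt_three]
    · linarith [Real.pi_gt_three]
  have hsin1 : 0 < Real.sin t₁ := Real.sin_pos_of_pos_of_lt_pi ht₁0
    (by linarith [Real.pi_gt_three])
  have hcoef : 0 < b - t₁ ^ 2 / b := by
    rw [sub_pos, div_lt_iff₀ hb0]
    nlinarith
  have hht₁ : 0 < h t₁ := by
    have hA : 0 < 2 * t₁ * Real.cos t₁ := by positivity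
    have hB : 0 < (b - t₁ ^ 2 / b) * Real.sin t₁ := mul_pos hcoef hsin1
    simp only [hh]
    linarith
  -- h s < 0
  have hhs : h s < 0 := by
    have hexp : h s = s * F s := by
      simp only [hh, hF, hb]
      field_simp
    rw [hexp]
    exact mul_neg_of_pos_of_neg hs0 hFs
  -- intermediate value: a root t₀ ∈ [t₁, s]
  obtain ⟨t₀, ht₀mem, ht₀⟩ : ∃ t₀ ∈ Set.Icc t₁ s, h t₀ = 0 := by
    have := intermediate_value_Icc' (le_of_lt ht₁s) hhcont.continuousOn
    have h0mem : (0 : ℝ) ∈ Set.Icc (h s) (h t₁) := ⟨hhs.le, hht₁.le⟩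
    obtain ⟨t₀, ht₀mem, ht₀⟩ := this h0mem
    exact ⟨t₀, ht₀mem, ht₀⟩
  have ht₀0 : 0 < t₀ := lt_of_lt_of_le ht₁0 ht₀mem.1
  -- the zero set in [0, s] is finite
  set T : Set ℝ := Set.Icc 0 s ∩ {t | h t = 0} with hT
  have hTcomp : IsCompact T := isCompact_Icc.inter_right (isClosed_eq hhcont continuous_const)
  have hnotzero : ¬ (∀ x, h x = 0) := fun hall => absurd (hall t₁) (ne_of_gt hht₁)
  have hTdisc : DiscreteTopology T := by
    rw [discreteTopology_subtype_iff]
    intro x hx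
    rcases (hhanal x (Set.mem_univ x)).eventually_eq_zero_or_eventually_ne_zero with hev | hev
    · exfalso
      apply hnotzero
      intro y
      exact hhanal.eqOn_zero_of_preconnected_of_eventuallyEq_zero isPreconnected_univ
        (Set.mem_univ x) hev (Set.mem_univ y)
    · rw [← Filter.empty_mem_iff_bot]
      have h1 : {z | h z ≠ 0} ∈ nhdsWithin x {x}ᶜ ⊓ Filter.principal T :=
        Filter.mem_inf_of_left hev
      have h2 : T ∈ nhdsWithin x {x}ᶜ ⊓ Filter.principal T :=
        Filter.mem_inf_of_right (Filter.mem_principal_self T)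
      have h3 : {z | h z ≠ 0} ∩ T ⊆ ∅ := by
        rintro z ⟨hz1, _, hz2⟩
        exact absurd hz2 hz1
      exact Filter.mem_of_superset (Filter.inter_mem h1 h2) h3
  have hTfin : T.Finite := hTcomp.finite (isDiscrete_iff_discreteTopology.mpr hTdisc)
  set Z : Set ℝ := {μ ∈ RobinEV b | μ ≤ s ^ 2} with hZ
  have hZsub : Z ⊆ (fun t => t ^ 2) '' T := by
    rintro μ ⟨⟨hμ0, hμeq⟩, hμle⟩
    refine ⟨Real.sqrt μ, ⟨⟨Real.sqrt_nonneg μ, ?_⟩, ?_⟩, Real.sq_sqrt hμ0.le⟩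
    · calc Real.sqrt μ ≤ Real.sqrt (s ^ 2) := Real.sqrt_le_sqrt hμle
        _ = s := hsqrt
    · show h (Real.sqrt μ) = 0
      simp only [hh]
      rw [Real.sq_sqrt hμ0.le]
      exact hμeq
  have hZfin : Z.Finite := (hTfin.image _).subset hZsub
  have hZne : Z.Nonempty := by
    refine ⟨t₀ ^ 2, ⟨⟨by positivity, ?_⟩, ?_⟩⟩
    · rw [Real.sqrt_sq ht₀0.le]
      exact ht₀
    · have := ht₀mem.2
      nlinarith
  have hcard : 1 ≤ Z.ncard := (Set.ncard_pos hZfin).mpr hZne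
  have hcardR : (1 : ℝ) ≤ (Z.ncard : ℝ) := by exact_mod_cast hcard
  have hlt1 : s / π < 1 := (div_lt_one Real.pi_pos).mpr hsπ
  calc s / π < 1 := hlt1
    _ ≤ (Z.ncard : ℝ) := hcardR
end

section
/- Let γ ≥ 0, d ≥ 2, and 1 ≤ m ≤ d−1, β > 0. Define r_{γ,d}(β) as the supremum over all cuboids R ⊂ ℝ^d and λ > 0 of Tr(−Δ_R^{β√λ}−λ)₋^γ / (L^{sc}_{γ,d}|R|λ^{γ+d/2}). Then r_{γ,d}(β) ≤ r_{γ,d−m}(β) · r_{γ+(d−m)/2, m}(β). -/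
open Real

/-- Riesz-mean summand with the paper's convention (counting function for γ = 0). -/
noncomputable def rieszWeight (γ lam μ : ℝ) : ℝ :=
  if μ ≤ lam then (lam - μ) ^ γ else 0

/-- Riesz mean of order γ of the Robin Laplacian with parameter `b` on the
cuboid ∏ᵢ (0, l i) ⊂ ℝ^d: by separation of variables its eigenvalues are the
sums over coordinates of `μᵢ / lᵢ²` with `μᵢ` an eigenvalue of the unit-interval
problem with parameter `b * l i`. -/
noncomputable def cuboidRobinRiesz (γ : ℝ) (d : ℕ) (l : Fin d → ℝ) (b lam : ℝ) : ℝ :=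
  ∑' k : (∀ i : Fin d, {μ : ℝ // μ ∈ RobinEV (b * l i)}),
    rieszWeight γ lam (∑ i, (k i : ℝ) / (l i) ^ 2)

/-- The semiclassical constant L^sc_{γ,d}. -/
noncomputable def Lsc (γ : ℝ) (d : ℕ) : ℝ :=
  Real.Gamma (1 + γ) / ((4 * Real.pi) ^ ((d : ℝ) / 2) * Real.Gamma (1 + γ + (d : ℝ) / 2))

/-- r_{γ,d}(β): the supremum over cuboids R ⊂ ℝ^d and λ > 0 of
Tr(-Δ_R^{β√λ} - λ)₋^γ / (L^sc_{γ,d}|R|λ^{γ+d/2}). -/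
noncomputable def rq (γ : ℝ) (d : ℕ) (β : ℝ) : ℝ :=
  sSup {x : ℝ | ∃ l : Fin d → ℝ, ∃ lam : ℝ, (∀ i, 0 < l i) ∧ 0 < lam ∧
    x = cuboidRobinRiesz γ d l (β * Real.sqrt lam) lam
          / (Lsc γ d * (∏ i, l i) * lam ^ (γ + (d : ℝ) / 2))}



section AuxRobin

noncomputable def Ff (c t : ℝ) : ℝ := 2*t*Real.cos t + (c - t^2/c)*Real.sin t
noncomputable def Hf (c t : ℝ) : ℝ := Real.cos t / Real.sin t - (t/(2*c) - c/(2*t))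

lemma continuous_Ff (c : ℝ) : Continuous (Ff c) := by
  unfold Ff; fun_prop

lemma Ff_eq_H {c t : ℝ} (hc : c ≠ 0) (ht : t ≠ 0) (hs : Real.sin t ≠ 0) :
    Ff c t = 2*t*Real.sin t * Hf c t := by
  unfold Ff Hf; field_simp; ring

lemma Hf_zero_of_root {c t : ℝ} (hc : c ≠ 0) (ht : t ≠ 0) (hs : Real.sin t ≠ 0)
    (hr : Ff c t = 0) : Hf c t = 0 := by
  rw [Ff_eq_H hc ht hs] at hr
  rcases mul_eq_zero.1 hr with h | h
  · exfalso; rcases mul_eq_zero.1 h with h' | h'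
    · exact ht (by linarith)
    · exact hs h'
  · exact h

lemma sin_ne_zero_of_root {c t : ℝ} (ht : 0 < t) (hr : Ff c t = 0) : Real.sin t ≠ 0 := by
  intro hs
  have h1 : Real.sin t ^ 2 + Real.cos t ^ 2 = 1 := Real.sin_sq_add_cos_sq t
  unfold Ff at hr
  rw [hs] at hr h1
  simp at hr h1
  rcases hr with h | h
  · exact absurd h (ne_of_gt ht)
  · rw [h] at h1; simp at h1

lemma exists_window {t : ℝ} (ht : 0 < t) (hs : Real.sin t ≠ 0) :
    ∃ k : ℕ, (k:ℝ)*π < t ∧ t < ((k:ℝ)+1)*π := by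
  have hπ := Real.pi_pos
  have h0 : (0:ℝ) ≤ t / π := le_of_lt (by positivity)
  refine ⟨⌊t/π⌋₊, ?_, ?_⟩
  · rcases lt_or_eq_of_le (Nat.floor_le h0) with h | h
    · calc (⌊t/π⌋₊:ℝ)*π < (t/π)*π := by exact mul_lt_mul_of_pos_right h hπ
        _ = t := by field_simp
    · exfalso; apply hs
      have : t = (⌊t/π⌋₊:ℝ) * π := by field_simp at h ⊢; linarith [h]
      rw [this]; exact Real.sin_nat_mul_pi _
  · have h2 : t/π < (⌊t/π⌋₊:ℝ) + 1 := Nat.lt_floor_add_one _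
    calc t = (t/π)*π := by field_simp
      _ < ((⌊t/π⌋₊:ℝ)+1)*π := by exact mul_lt_mul_of_pos_right h2 hπ

lemma sin_window_pos {k : ℕ} {t : ℝ} (h1 : (k:ℝ)*π < t) (h2 : t < ((k:ℝ)+1)*π) :
    0 < (-1:ℝ)^k * Real.sin t := by
  have hπ := Real.pi_pos
  have hs : Real.sin t = (-1:ℝ)^k * Real.sin (t - k*π) := by
    have h := Real.sin_add_nat_mul_pi (t - k*π) k
    rw [sub_add_cancel] at h
    rw [h]
  have hp : 0 < Real.sin (t - k*π) :=
    Real.sin_pos_of_pos_of_lt_pi (by linarith) (by linarith)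
  rw [hs, ← mul_assoc, ← pow_add]
  have he : (-1:ℝ)^(k+k) = 1 := by
    have : Even (k+k) := ⟨k, rfl⟩
    exact this.neg_one_pow
  rw [he]; linarith

lemma sin_ne_zero_window {k : ℕ} {t : ℝ} (h1 : (k:ℝ)*π < t) (h2 : t < ((k:ℝ)+1)*π) :
    Real.sin t ≠ 0 := by
  intro h
  have hp := sin_window_pos h1 h2
  rw [h, mul_zero] at hp
  exact lt_irrefl 0 hp

lemma Hf_hasDeriv {c t : ℝ} (hc : 0 < c) (ht : 0 < t) (hs : Real.sin t ≠ 0) :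
    ∃ D, HasDerivAt (Hf c) D t ∧ D < 0 := by
  have h1 : HasDerivAt (fun u : ℝ => Real.cos u / Real.sin u)
      ((-Real.sin t * Real.sin t - Real.cos t * Real.cos t)/Real.sin t^2) t :=
    (Real.hasDerivAt_cos t).div (Real.hasDerivAt_sin t) hs
  have h2a : HasDerivAt (fun u : ℝ => u/(2*c)) (1/(2*c)) t := by
    simpa using (hasDerivAt_id t).div_const (2*c)
  have h2b : HasDerivAt (fun u : ℝ => c/(2*u)) ((c/2) * (-(t^2)⁻¹)) t := by
    have h := (hasDerivAt_inv (ne_of_gt ht)).const_mul (c/2)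
    have hfun : (fun u : ℝ => c/(2*u)) = (fun y => c/2 * y⁻¹) := by
      funext u
      ring
    rw [hfun]; exact h
  have h := h1.sub (h2a.sub h2b)
  refine ⟨_, h, ?_⟩
  have e1 : -Real.sin t * Real.sin t - Real.cos t * Real.cos t = -1 := by
    nlinarith [Real.sin_sq_add_cos_sq t]
  rw [e1]
  have hs2 : 0 < Real.sin t ^ 2 := by positivity
  have k1 : -1/Real.sin t^2 < 0 := by
    rw [neg_div]
    simp only [neg_neg, Left.neg_neg_iff]
    positivity
  have k2 : 0 < 1/(2*c) - c/2 * -(t^2)⁻¹ := by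
    have : c/2 * -(t^2)⁻¹ = -(c/(2*t^2)) := by field_simp
    rw [this]
    have : 0 < c/(2*t^2) := by positivity
    have : 0 < 1/(2*c) := by positivity
    linarith [show (0:ℝ) < c/(2*t^2) by positivity]
  linarith

lemma Hf_strictAntiOn {c : ℝ} (hc : 0 < c) (k : ℕ) :
    StrictAntiOn (Hf c) (Set.Ioo ((k:ℝ)*π) (((k:ℝ)+1)*π)) := by
  have hπ := Real.pi_pos
  have hpos : ∀ x ∈ Set.Ioo ((k:ℝ)*π) (((k:ℝ)+1)*π), 0 < x := by
    intro x hx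
    have hk : (0:ℝ) ≤ (k:ℝ)*π := by positivity
    linarith [hx.1]
  apply strictAntiOn_of_deriv_neg (convex_Ioo _ _)
  · intro x hx
    obtain ⟨D, hD, _⟩ := Hf_hasDeriv hc (hpos x hx) (sin_ne_zero_window hx.1 hx.2)
    exact hD.continuousAt.continuousWithinAt
  · intro x hx
    rw [interior_Ioo] at hx
    obtain ⟨D, hD, hDneg⟩ := Hf_hasDeriv hc (hpos x hx) (sin_ne_zero_window hx.1 hx.2)
    rw [hD.deriv]; exact hDneg

lemma window_pos {k : ℕ} {t : ℝ} (h1 : (k:ℝ)*π < t) : 0 < t := by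
  have : (0:ℝ) ≤ (k:ℝ)*π := by positivity
  linarith

lemma root_unique {c t₁ t₂ : ℝ} (hc : 0 < c) {k : ℕ}
    (h₁ : t₁ ∈ Set.Ioo ((k:ℝ)*π) (((k:ℝ)+1)*π)) (h₂ : t₂ ∈ Set.Ioo ((k:ℝ)*π) (((k:ℝ)+1)*π))
    (r₁ : Ff c t₁ = 0) (r₂ : Ff c t₂ = 0) : t₁ = t₂ := by
  have e₁ : Hf c t₁ = 0 := Hf_zero_of_root (ne_of_gt hc) (ne_of_gt (window_pos h₁.1))
    (sin_ne_zero_window h₁.1 h₁.2) r₁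
  have e₂ : Hf c t₂ = 0 := Hf_zero_of_root (ne_of_gt hc) (ne_of_gt (window_pos h₂.1))
    (sin_ne_zero_window h₂.1 h₂.2) r₂
  exact (Hf_strictAntiOn hc k).injOn h₁ h₂ (by rw [e₁, e₂])

lemma Hf_mono_c {c₁ c₂ t : ℝ} (h1 : 0 < c₁) (h12 : c₁ ≤ c₂) (ht : 0 < t)
    (hs : Real.sin t ≠ 0) : Hf c₁ t ≤ Hf c₂ t := by
  unfold Hf
  have h2 : 0 < c₂ := lt_of_lt_of_le h1 h12
  have k1 : t/(2*c₂) ≤ t/(2*c₁) := by gcongr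
  have k2 : c₁/(2*t) ≤ c₂/(2*t) := by gcongr
  linarith

lemma exists_root_le {c₁ c₂ t₂ : ℝ} (h1 : 0 < c₁) (h12 : c₁ ≤ c₂) {k : ℕ}
    (hw : t₂ ∈ Set.Ioo ((k:ℝ)*π) (((k:ℝ)+1)*π)) (hr : Ff c₂ t₂ = 0) :
    ∃ t₁, Ff c₁ t₁ = 0 ∧ (k:ℝ)*π < t₁ ∧ t₁ ≤ t₂ := by
  have hπ := Real.pi_pos
  have h2 : 0 < c₂ := lt_of_lt_of_le h1 h12
  have ht₂ : 0 < t₂ := window_pos hw.1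
  have hs₂ : Real.sin t₂ ≠ 0 := sin_ne_zero_window hw.1 hw.2
  have hH2 : Hf c₂ t₂ = 0 := Hf_zero_of_root (ne_of_gt h2) (ne_of_gt ht₂) hs₂ hr
  have hH1 : Hf c₁ t₂ ≤ 0 := by
    have := Hf_mono_c h1 h12 ht₂ hs₂; linarith
  -- g := (-1)^k * Ff c₁
  set g : ℝ → ℝ := fun t => (-1:ℝ)^k * Ff c₁ t with hg
  have hgt₂ : g t₂ ≤ 0 := by
    have e : Ff c₁ t₂ = 2*t₂*Real.sin t₂ * Hf c₁ t₂ :=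
      Ff_eq_H (ne_of_gt h1) (ne_of_gt ht₂) hs₂
    have hsp : 0 < (-1:ℝ)^k * Real.sin t₂ := sin_window_pos hw.1 hw.2
    have : g t₂ = (2*t₂) * ((-1:ℝ)^k * Real.sin t₂) * Hf c₁ t₂ := by rw [hg]; simp only []; rw [e]; ring
    rw [this]
    apply mul_nonpos_of_nonneg_of_nonpos (by positivity) hH1
  -- left point a
  obtain ⟨a, ha1, ha2, hga⟩ :
      ∃ a, (k:ℝ)*π ≤ a ∧ a < t₂ ∧ 0 < g a := by
    rcases Nat.eq_zero_or_pos k with hk | hk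
    · subst hk
      refine ⟨min t₂ c₁ / 2, ?_, ?_, ?_⟩
      · simp; positivity
      · have : min t₂ c₁ ≤ t₂ := min_le_left _ _
        linarith
      · have ha0 : 0 < min t₂ c₁ / 2 := by positivity
        have hac : min t₂ c₁ / 2 ≤ c₁/2 := by
          have := min_le_right t₂ c₁; linarith
        have hat : min t₂ c₁ / 2 < t₂ := by
          have := min_le_left t₂ c₁; linarith
        have haπ : min t₂ c₁ / 2 < π/2 := by
          have h' : t₂ < π := by simpa using hw.2
          have := min_le_left t₂ c₁; linarith
        set a := min t₂ c₁ / 2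
        have hcos : 0 < Real.cos a := Real.cos_pos_of_mem_Ioo ⟨by linarith, haπ⟩
        have hsin : 0 < Real.sin a := Real.sin_pos_of_pos_of_lt_pi ha0 (by linarith)
        have hcc : 0 ≤ c₁ - a^2/c₁ := by
          rw [sub_nonneg, div_le_iff₀ h1]; nlinarith
        have : 0 < Ff c₁ a := by
          unfold Ff
          have t1 : 0 < 2*a*Real.cos a := by positivity
          have t2 : 0 ≤ (c₁ - a^2/c₁)*Real.sin a := mul_nonneg hcc (le_of_lt hsin)
          linarith
        simpa [hg] using this
    · refine ⟨(k:ℝ)*π, le_refl _, hw.1, ?_⟩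
      have e : Ff c₁ ((k:ℝ)*π) = 2*((k:ℝ)*π)*Real.cos ((k:ℝ)*π) := by
        unfold Ff; rw [Real.sin_nat_mul_pi]; ring
      have hcos : Real.cos ((k:ℝ)*π) = (-1:ℝ)^k := by
        have := Real.cos_add_nat_mul_pi 0 k
        simpa using this
      have hkpos : (0:ℝ) < (k:ℝ)*π := by
        have : (1:ℝ) ≤ (k:ℝ) := by exact_mod_cast hk
        nlinarith
      rw [hg]
      simp only []
      rw [e, hcos]
      have : (-1:ℝ)^k * (2*((k:ℝ)*π)*(-1:ℝ)^k) = 2*((k:ℝ)*π)*((-1:ℝ)^k)^2 := by ring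
      rw [this]
      have h2 : ((-1:ℝ)^k)^2 = 1 := by
        rw [← pow_mul, mul_comm, pow_mul]; simp
      rw [h2]; linarith
  -- IVT
  have hcont : ContinuousOn g (Set.Icc a t₂) :=
    (continuous_const.mul (continuous_Ff c₁)).continuousOn
  have hsub : Set.Icc (g t₂) (g a) ⊆ g '' Set.Icc a t₂ :=
    intermediate_value_Icc' (le_of_lt ha2) hcont
  obtain ⟨x, hx, hgx⟩ := hsub ⟨hgt₂, le_of_lt hga⟩
  have hfx : Ff c₁ x = 0 := by
    have : (-1:ℝ)^k * Ff c₁ x = 0 := hgx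
    rcases mul_eq_zero.1 this with h | h
    · exfalso; revert h; simp [pow_ne_zero]
    · exact h
  have hxa : x ≠ a := by
    intro h; rw [h] at hgx; rw [hgx] at hga; exact lt_irrefl _ hga
  exact ⟨x, hfx, lt_of_le_of_lt ha1 (lt_of_le_of_ne hx.1 (Ne.symm hxa)), hx.2⟩

lemma root_sq_ge {c t : ℝ} (hc : 0 < c) (ht : 0 < t) (hr : Ff c t = 0) :
    min c 1 ≤ t^2 := by
  rcases le_or_gt 1 t with h | h
  · have : (1:ℝ) ≤ t^2 := by nlinarith
    exact le_trans (min_le_right _ _) this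
  · have hπ := Real.pi_gt_three
    have hs : 0 < Real.sin t := Real.sin_pos_of_pos_of_lt_pi ht (by linarith)
    have hH : Hf c t = 0 := Hf_zero_of_root (ne_of_gt hc) (ne_of_gt ht) (ne_of_gt hs) hr
    have E : 2*c*t*Real.cos t = (t^2 - c^2) * Real.sin t := by
      unfold Hf at hH
      field_simp at hH
      linarith [hH]
    have hsint : Real.sin t < t := Real.sin_lt ht
    have hcos : 1 - t^2/2 ≤ Real.cos t := Real.one_sub_sq_div_two_le_cos
    have hcos' : (1:ℝ)/2 ≤ Real.cos t := by nlinarith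
    rcases le_total c 1 with hc1 | hc1
    · rw [min_eq_left hc1]
      nlinarith [mul_pos hc ht, mul_pos (mul_pos hc ht) hs]
    · rw [min_eq_right hc1]
      nlinarith [mul_pos hc ht, mul_pos (mul_pos hc ht) hs]

lemma mem_RobinEV_iff {c μ : ℝ} (hμ : 0 ≤ μ) :
    μ ∈ RobinEV c ↔ 0 < μ ∧ Ff c (Real.sqrt μ) = 0 := by
  unfold RobinEV Ff
  rw [Real.sq_sqrt hμ]
  rfl

lemma robin_pos {c μ : ℝ} (h : μ ∈ RobinEV c) : 0 < μ := h.1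

lemma robin_sqrt_pos {c μ : ℝ} (h : μ ∈ RobinEV c) : 0 < Real.sqrt μ :=
  Real.sqrt_pos.2 h.1

lemma robin_root {c μ : ℝ} (h : μ ∈ RobinEV c) : Ff c (Real.sqrt μ) = 0 :=
  ((mem_RobinEV_iff (le_of_lt h.1)).1 h).2

lemma robin_min {c μ : ℝ} (hc : 0 < c) (h : μ ∈ RobinEV c) : min c 1 ≤ μ := by
  have := root_sq_ge hc (robin_sqrt_pos h) (robin_root h)
  rwa [Real.sq_sqrt (le_of_lt h.1)] at this

/-- The window index of an eigenvalue. -/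
noncomputable def Wdx (μ : ℝ) : ℕ := ⌊Real.sqrt μ / π⌋₊

lemma robin_window {c μ : ℝ} (h : μ ∈ RobinEV c) :
    (Wdx μ : ℝ)*π < Real.sqrt μ ∧ Real.sqrt μ < ((Wdx μ : ℝ)+1)*π := by
  have hπ := Real.pi_pos
  obtain ⟨k, h1, h2⟩ := exists_window (robin_sqrt_pos h)
    (sin_ne_zero_of_root (robin_sqrt_pos h) (robin_root h))
  have hk : Wdx μ = k := by
    unfold Wdx
    rw [Nat.floor_eq_iff (by positivity)]
    constructor
    · rw [le_div_iff₀ hπ]; linarith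
    · rw [div_lt_iff₀ hπ]; linarith
  rw [hk]; exact ⟨h1, h2⟩

lemma robin_W_injOn {c : ℝ} (hc : 0 < c) : Set.InjOn Wdx (RobinEV c) := by
  intro μ₁ h₁ μ₂ h₂ he
  have w₁ := robin_window h₁
  have w₂ := robin_window h₂
  rw [he] at w₁
  have := root_unique hc (k := Wdx μ₂) ⟨w₁.1, w₁.2⟩ ⟨w₂.1, w₂.2⟩ (robin_root h₁) (robin_root h₂)
  calc μ₁ = Real.sqrt μ₁ ^ 2 := (Real.sq_sqrt (le_of_lt h₁.1)).symm
    _ = Real.sqrt μ₂ ^ 2 := by rw [this]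
    _ = μ₂ := Real.sq_sqrt (le_of_lt h₂.1)

/-- Counting bound: any finset of eigenvalues below `Λ` has cardinality at most `√Λ/π + 1`. -/
lemma robin_card_bound {c Λ : ℝ} (hc : 0 < c) (s : Finset ℝ)
    (hs : ∀ μ ∈ s, μ ∈ RobinEV c ∧ μ ≤ Λ) :
    (s.card : ℝ) ≤ Real.sqrt Λ / π + 1 := by
  have hπ := Real.pi_pos
  have hcard : s.card ≤ (Finset.range (⌊Real.sqrt Λ / π⌋₊ + 1)).card := by
    apply Finset.card_le_card_of_injOn Wdx
    · intro μ hμ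
      obtain ⟨hm, hΛ⟩ := hs μ hμ
      have w := robin_window hm
      have hle : Real.sqrt μ ≤ Real.sqrt Λ := Real.sqrt_le_sqrt hΛ
      have : (Wdx μ : ℝ) < Real.sqrt Λ / π := by
        rw [lt_div_iff₀ hπ]; linarith [w.1]
      simp only [Finset.coe_range, Set.mem_Iio, Finset.mem_range]
      have : Wdx μ ≤ ⌊Real.sqrt Λ / π⌋₊ := Nat.le_floor (le_of_lt this)
      omega
    · intro μ₁ h₁ μ₂ h₂ he
      exact robin_W_injOn hc (hs μ₁ h₁).1 (hs μ₂ h₂).1 he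
  rw [Finset.card_range] at hcard
  have h1 : ((⌊Real.sqrt Λ / π⌋₊ : ℕ) : ℝ) ≤ Real.sqrt Λ / π := Nat.floor_le (by positivity)
  calc (s.card : ℝ) ≤ (⌊Real.sqrt Λ / π⌋₊ + 1 : ℕ) := by exact_mod_cast hcard
    _ ≤ Real.sqrt Λ / π + 1 := by push_cast; linarith

/-- Finiteness of eigenvalues below a threshold. -/
lemma robin_finite_below {c : ℝ} (hc : 0 < c) (Λ : ℝ) :
    {μ : ℝ | μ ∈ RobinEV c ∧ μ ≤ Λ}.Finite := by
  apply Set.Finite.of_finite_image (f := Wdx)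
  · apply Set.Finite.subset (Set.finite_Iio (⌊Real.sqrt Λ / π⌋₊ + 1))
    rintro n ⟨μ, ⟨hm, hΛ⟩, rfl⟩
    have hπ := Real.pi_pos
    have w := robin_window hm
    have hle : Real.sqrt μ ≤ Real.sqrt Λ := Real.sqrt_le_sqrt hΛ
    have : (Wdx μ : ℝ) < Real.sqrt Λ / π := by
      rw [lt_div_iff₀ hπ]; linarith [w.1]
    have : Wdx μ ≤ ⌊Real.sqrt Λ / π⌋₊ := Nat.le_floor (le_of_lt this)
    simp only [Set.mem_Iio]; omega
  · exact (robin_W_injOn hc).mono (fun μ h => h.1)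

/-- Monotonicity: comparison map. -/
lemma robin_compare {c₁ c₂ μ₂ : ℝ} (h1 : 0 < c₁) (h12 : c₁ ≤ c₂) (h₂ : μ₂ ∈ RobinEV c₂) :
    ∃ μ₁ ∈ RobinEV c₁, μ₁ ≤ μ₂ ∧ Wdx μ₁ = Wdx μ₂ := by
  have hπ := Real.pi_pos
  have w := robin_window h₂
  obtain ⟨t₁, hroot, hgt, hle⟩ := exists_root_le h1 h12 ⟨w.1, w.2⟩ (robin_root h₂)
  have ht₁ : 0 < t₁ := by
    have : (0:ℝ) ≤ (Wdx μ₂ : ℝ)*π := by positivity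
    linarith
  have hsq : Real.sqrt (t₁^2) = t₁ := Real.sqrt_sq (le_of_lt ht₁)
  have hmem : t₁^2 ∈ RobinEV c₁ := by
    rw [mem_RobinEV_iff (by positivity)]
    exact ⟨by positivity, by rw [hsq]; exact hroot⟩
  refine ⟨t₁^2, hmem, ?_, ?_⟩
  · have : t₁^2 ≤ Real.sqrt μ₂ ^ 2 := by nlinarith [robin_sqrt_pos h₂]
    rwa [Real.sq_sqrt (le_of_lt h₂.1)] at this
  · have w₁ := robin_window hmem
    rw [hsq] at w₁
    -- t₁ in window (Wdx μ₂); floor uniqueness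
    show ⌊Real.sqrt (t₁^2) / π⌋₊ = Wdx μ₂
    rw [hsq]
    rw [Nat.floor_eq_iff (by positivity)]
    constructor
    · rw [le_div_iff₀ hπ]; linarith
    · rw [div_lt_iff₀ hπ]
      have := lt_of_le_of_lt hle w.2
      push_cast
      linarith

/-! ### rieszWeight lemmas -/

lemma rieszWeight_nonneg (γ lam μ : ℝ) : 0 ≤ rieszWeight γ lam μ := by
  unfold rieszWeight
  split
  · exact Real.rpow_nonneg (by linarith [‹μ ≤ lam›]) γ
  · exact le_refl 0

lemma rieszWeight_le (hγ : 0 ≤ γ) {lam μ : ℝ} (hμ : 0 ≤ μ) (hlam : 0 ≤ lam) :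
    rieszWeight γ lam μ ≤ lam ^ γ := by
  unfold rieszWeight
  split
  · exact Real.rpow_le_rpow (by linarith [‹μ ≤ lam›]) (by linarith) hγ
  · exact Real.rpow_nonneg hlam γ

lemma rieszWeight_anti (hγ : 0 ≤ γ) {lam μ μ' : ℝ} (h : μ ≤ μ') :
    rieszWeight γ lam μ' ≤ rieszWeight γ lam μ := by
  unfold rieszWeight
  by_cases h' : μ' ≤ lam
  · rw [if_pos h', if_pos (le_trans h h')]
    exact Real.rpow_le_rpow (by linarith) (by linarith) hγ
  · rw [if_neg h']
    split
    · exact Real.rpow_nonneg (by linarith [‹μ ≤ lam›]) γ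
    · exact le_refl 0

lemma rieszWeight_shift (γ lam A B : ℝ) :
    rieszWeight γ lam (A + B) = rieszWeight γ (lam - B) A := by
  unfold rieszWeight
  by_cases h : A + B ≤ lam
  · rw [if_pos h, if_pos (by linarith)]
    ring_nf
  · rw [if_neg h, if_neg (by intro hh; exact h (by linarith))]

lemma rieszWeight_zero_of {γ lam μ : ℝ} (h : lam < μ) : rieszWeight γ lam μ = 0 := by
  unfold rieszWeight
  rw [if_neg (by linarith)]

lemma rieszWeight_pow {γ lam B : ℝ} (h : B ≤ lam) :
    rieszWeight γ lam B = (lam - B) ^ γ := by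
  unfold rieszWeight; rw [if_pos h]

/-! ### trace support finiteness -/

section Trace
variable {d : ℕ} {γ : ℝ} {l : Fin d → ℝ} {b lam : ℝ}

lemma trace_term_pos (hb : 0 < b) (hl : ∀ i, 0 < l i)
    (k : ∀ i : Fin d, {μ : ℝ // μ ∈ RobinEV (b * l i)}) (i : Fin d) :
    0 < (k i : ℝ) / (l i) ^ 2 := by
  have := robin_pos (k i).2
  have := hl i
  positivity

lemma trace_sum_nonneg (hb : 0 < b) (hl : ∀ i, 0 < l i)
    (k : ∀ i : Fin d, {μ : ℝ // μ ∈ RobinEV (b * l i)}) :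
    0 ≤ ∑ i, (k i : ℝ) / (l i) ^ 2 :=
  Finset.sum_nonneg (fun i _ => le_of_lt (trace_term_pos hb hl k i))

lemma trace_single_le (hb : 0 < b) (hl : ∀ i, 0 < l i)
    (k : ∀ i : Fin d, {μ : ℝ // μ ∈ RobinEV (b * l i)}) (i : Fin d) :
    (k i : ℝ) / (l i) ^ 2 ≤ ∑ j, (k j : ℝ) / (l j) ^ 2 :=
  Finset.single_le_sum (fun j _ => le_of_lt (trace_term_pos hb hl k j)) (Finset.mem_univ i)

lemma trace_support_subset (hb : 0 < b) (hl : ∀ i, 0 < l i) :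
    Function.support (fun k : (∀ i : Fin d, {μ : ℝ // μ ∈ RobinEV (b * l i)}) =>
      rieszWeight γ lam (∑ i, (k i : ℝ) / (l i) ^ 2)) ⊆
    Set.pi Set.univ (fun i => {x : {μ : ℝ // μ ∈ RobinEV (b * l i)} | (x : ℝ) ≤ lam * (l i)^2}) := by
  intro k hk
  intro i _
  have hne : rieszWeight γ lam (∑ j, (k j : ℝ) / (l j) ^ 2) ≠ 0 := hk
  have hle : ∑ j, (k j : ℝ) / (l j) ^ 2 ≤ lam := by
    by_contra h
    exact hne (rieszWeight_zero_of (by linarith))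
  have h1 := trace_single_le hb hl k i
  have h2 : (k i : ℝ) / (l i) ^ 2 ≤ lam := le_trans h1 hle
  have hli : 0 < (l i)^2 := by have := hl i; positivity
  calc ((k i : ℝ)) = (k i : ℝ) / (l i)^2 * (l i)^2 := by rw [div_mul_cancel₀ _ (ne_of_gt hli)]
    _ ≤ lam * (l i)^2 := by apply mul_le_mul_of_nonneg_right h2 (le_of_lt hli)

lemma trace_coord_finite (hb : 0 < b) (hl : ∀ i, 0 < l i) (i : Fin d) :
    {x : {μ : ℝ // μ ∈ RobinEV (b * l i)} | (x : ℝ) ≤ lam * (l i)^2}.Finite := by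
  have hc : 0 < b * l i := by have := hl i; positivity
  have hfin := robin_finite_below hc (lam * (l i)^2)
  have heq : {x : {μ : ℝ // μ ∈ RobinEV (b * l i)} | (x : ℝ) ≤ lam * (l i)^2} =
      (fun x : {μ : ℝ // μ ∈ RobinEV (b * l i)} => (x : ℝ)) ⁻¹'
        {μ : ℝ | μ ∈ RobinEV (b * l i) ∧ μ ≤ lam * (l i)^2} := by
    ext x
    simp only [Set.mem_setOf_eq, Set.mem_preimage]
    exact ⟨fun h => ⟨x.2, h⟩, fun h => h.2⟩
  rw [heq]
  exact Set.Finite.preimage (Subtype.coe_injective.injOn) hfin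

lemma trace_support_finite (hb : 0 < b) (hl : ∀ i, 0 < l i) :
    (Function.support (fun k : (∀ i : Fin d, {μ : ℝ // μ ∈ RobinEV (b * l i)}) =>
      rieszWeight γ lam (∑ i, (k i : ℝ) / (l i) ^ 2))).Finite :=
  Set.Finite.subset (Set.Finite.pi (fun i => trace_coord_finite hb hl i))
    (trace_support_subset hb hl)

lemma trace_summable (hb : 0 < b) (hl : ∀ i, 0 < l i) :
    Summable (fun k : (∀ i : Fin d, {μ : ℝ // μ ∈ RobinEV (b * l i)}) =>
      rieszWeight γ lam (∑ i, (k i : ℝ) / (l i) ^ 2)) := by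
  apply summable_of_ne_finset_zero (s := (trace_support_finite (γ := γ) (lam := lam) hb hl).toFinset)
  intro k hk
  by_contra h
  exact hk ((Set.Finite.mem_toFinset _).2 h)

lemma trace_nonneg (γ : ℝ) (d : ℕ) (l : Fin d → ℝ) (b lam : ℝ) :
    0 ≤ cuboidRobinRiesz γ d l b lam :=
  tsum_nonneg (fun k => rieszWeight_nonneg _ _ _)

end Trace

lemma trace_mono_b {d : ℕ} {γ : ℝ} (hγ : 0 ≤ γ) {l : Fin d → ℝ} (hl : ∀ i, 0 < l i)
    {b₁ b₂ lam : ℝ} (hb1 : 0 < b₁) (hb12 : b₁ ≤ b₂) :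
    cuboidRobinRiesz γ d l b₂ lam ≤ cuboidRobinRiesz γ d l b₁ lam := by
  have hb2 : 0 < b₂ := lt_of_lt_of_le hb1 hb12
  have key : ∀ i (x : {μ : ℝ // μ ∈ RobinEV (b₂ * l i)}),
      ∃ y : {μ : ℝ // μ ∈ RobinEV (b₁ * l i)}, (y : ℝ) ≤ (x : ℝ) ∧ Wdx (y : ℝ) = Wdx (x : ℝ) := by
    intro i x
    have hc1 : 0 < b₁ * l i := by have := hl i; positivity
    have hc12 : b₁ * l i ≤ b₂ * l i := by
      have := hl i; apply mul_le_mul_of_nonneg_right hb12 (le_of_lt this)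
    obtain ⟨μ₁, hm, hle, hW⟩ := robin_compare hc1 hc12 x.2
    exact ⟨⟨μ₁, hm⟩, hle, hW⟩
  choose φ hφle hφW using key
  set Φ : (∀ i, {μ : ℝ // μ ∈ RobinEV (b₂ * l i)}) → (∀ i, {μ : ℝ // μ ∈ RobinEV (b₁ * l i)}) :=
    fun k i => φ i (k i) with hΦ
  have hΦinj : Function.Injective Φ := by
    intro k k' h
    funext i
    have hi : φ i (k i) = φ i (k' i) := congrFun h i
    have hWi : Wdx ((k i : ℝ)) = Wdx ((k' i : ℝ)) := by
      rw [← hφW i (k i), ← hφW i (k' i), hi]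
    have hc2 : 0 < b₂ * l i := by have := hl i; positivity
    exact Subtype.ext (robin_W_injOn hc2 (k i).2 (k' i).2 hWi)
  have hsum1 := trace_summable (d := d) (γ := γ) (l := l) (lam := lam) hb1 hl
  have hsum2 := trace_summable (d := d) (γ := γ) (l := l) (lam := lam) hb2 hl
  apply Summable.tsum_le_tsum_of_inj Φ hΦinj
  · intro c _
    exact rieszWeight_nonneg _ _ _
  · intro k
    apply rieszWeight_anti hγ
    apply Finset.sum_le_sum
    intro i _
    have := hφle i (k i)
    have hli := hl i
    gcongr
  · exact hsum2
  · exact hsum1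

lemma Lsc_pos {γ : ℝ} (hγ : 0 ≤ γ) (d : ℕ) : 0 < Lsc γ d := by
  unfold Lsc
  have h1 : 0 < Real.Gamma (1 + γ) := Real.Gamma_pos_of_pos (by linarith)
  have h2 : 0 < Real.Gamma (1 + γ + (d : ℝ)/2) := Real.Gamma_pos_of_pos (by positivity)
  have h3 : 0 < (4 * Real.pi) ^ ((d : ℝ)/2) :=
    Real.rpow_pos_of_pos (by positivity) _
  positivity

lemma Lsc_mul {γ : ℝ} (hγ : 0 ≤ γ) (n m : ℕ) :
    Lsc γ n * Lsc (γ + (n : ℝ)/2) m = Lsc γ (n + m) := by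
  unfold Lsc
  have hπ := Real.pi_pos
  have e1 : (1 : ℝ) + (γ + (n:ℝ)/2) = 1 + γ + (n:ℝ)/2 := by ring
  have e2 : (1 : ℝ) + γ + (n:ℝ)/2 + (m:ℝ)/2 = 1 + γ + ((n+m : ℕ):ℝ)/2 := by
    push_cast; ring
  rw [e1, e2]
  have h2 : Real.Gamma (1 + γ + (n : ℝ)/2) ≠ 0 :=
    ne_of_gt (Real.Gamma_pos_of_pos (by positivity))
  have h3 : Real.Gamma (1 + γ + ((n+m : ℕ):ℝ)/2) ≠ 0 :=
    ne_of_gt (Real.Gamma_pos_of_pos (by positivity))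
  have hp : (4 * Real.pi) ^ ((n:ℝ)/2) * (4 * Real.pi) ^ ((m:ℝ)/2)
      = (4 * Real.pi) ^ (((n+m : ℕ):ℝ)/2) := by
    rw [← Real.rpow_add (by positivity)]
    congr 1
    push_cast; ring
  have hpn : (4 * Real.pi) ^ ((n:ℝ)/2) ≠ 0 := ne_of_gt (Real.rpow_pos_of_pos (by positivity) _)
  have hpm : (4 * Real.pi) ^ ((m:ℝ)/2) ≠ 0 := ne_of_gt (Real.rpow_pos_of_pos (by positivity) _)
  field_simp
  rw [show ((n+m:ℕ):ℝ)/2 = (n:ℝ)/2 + (m:ℝ)/2 from by push_cast; ring,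
    Real.rpow_add (by positivity : (0:ℝ) < 4*π)]

lemma uaux {β u : ℝ} (hβ : 0 < β) (hu : 0 < u) (h : min (β*u) 1 ≤ u^2) : min β 1 ≤ u := by
  rcases le_total (β*u) 1 with h1 | h1
  · rw [min_eq_left h1] at h
    have : β ≤ u := by nlinarith
    exact le_trans (min_le_left _ _) this
  · rw [min_eq_right h1] at h
    have : 1 ≤ u := by nlinarith
    exact le_trans (min_le_right _ _) this

set_option maxHeartbeats 1000000 in
lemma rq_set_bddAbove (γ : ℝ) (hγ : 0 ≤ γ) (d : ℕ) (β : ℝ) (hβ : 0 < β) :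
    BddAbove {x : ℝ | ∃ l : Fin d → ℝ, ∃ lam : ℝ, (∀ i, 0 < l i) ∧ 0 < lam ∧
      x = cuboidRobinRiesz γ d l (β * Real.sqrt lam) lam
            / (Lsc γ d * (∏ i, l i) * lam ^ (γ + (d : ℝ) / 2))} := by
  have hπ := Real.pi_pos
  have hu₀ : 0 < min β 1 := by positivity
  set u₀ := min β 1
  set M := (1/Lsc γ d) * (1/π + 1/u₀)^d with hM
  have hLsc := Lsc_pos hγ d
  have hMpos : 0 < M := by positivity
  refine ⟨M, ?_⟩
  rintro x ⟨l, lam, hl, hlam, rfl⟩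
  set b := β * Real.sqrt lam with hb'
  have hsl : 0 < Real.sqrt lam := Real.sqrt_pos.2 hlam
  have hb : 0 < b := by positivity
  obtain ⟨u, hu⟩ : ∃ u : Fin d → ℝ, ∀ i, u i = l i * Real.sqrt lam :=
    ⟨_, fun i => rfl⟩
  have hupos : ∀ i, 0 < u i := fun i => by rw [hu i]; have := hl i; positivity
  -- denominator
  have hD : 0 < Lsc γ d * (∏ i, l i) * lam ^ (γ + (d : ℝ) / 2) := by
    have h1 : 0 < ∏ i, l i := Finset.prod_pos (fun i _ => hl i)
    have h2 : 0 < lam ^ (γ + (d : ℝ)/2) := Real.rpow_pos_of_pos hlam _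
    positivity
  rw [div_le_iff₀ hD]
  -- trace as finite sum
  have hfin := trace_support_finite (γ := γ) (lam := lam) hb hl
  set F := hfin.toFinset with hF
  have hT : cuboidRobinRiesz γ d l b lam
      = ∑ k ∈ F, rieszWeight γ lam (∑ i, (k i : ℝ) / (l i) ^ 2) := by
    apply tsum_eq_sum
    intro k hk
    by_contra h
    exact hk ((Set.Finite.mem_toFinset _).2 h)
  rcases Finset.eq_empty_or_nonempty F with hFe | ⟨k₀, hk₀⟩
  · rw [hT, hFe, Finset.sum_empty]
    positivity
  -- lower bounds on u i
  have hk₀mem : ∀ i, ((k₀ i : ℝ)) ≤ lam * (l i)^2 := by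
    intro i
    have := trace_support_subset hb hl ((Set.Finite.mem_toFinset _).1 hk₀)
    exact this i (Set.mem_univ i)
  have hui : ∀ i, u₀ ≤ u i := by
    intro i
    have hci : 0 < b * l i := by have := hl i; positivity
    have hmin := robin_min hci (k₀ i).2
    apply uaux hβ (hupos i)
    have h1 : b * l i = β * u i := by rw [hu i, hb']; ring
    rw [← h1]
    have hsq2 : Real.sqrt lam ^ 2 = lam := Real.sq_sqrt (le_of_lt hlam)
    calc min (b * l i) 1 ≤ ((k₀ i : ℝ)) := hmin
      _ ≤ lam * (l i)^2 := hk₀mem i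
      _ = (u i)^2 := by rw [hu i]; nlinarith [hsq2]
  -- counting
  set t : ∀ i : Fin d, Finset {μ : ℝ // μ ∈ RobinEV (b * l i)} :=
    fun i => (trace_coord_finite (lam := lam) hb hl i).toFinset with ht
  have hFsub : F ⊆ Fintype.piFinset t := by
    intro k hk
    rw [Fintype.mem_piFinset]
    intro i
    simp only [ht, Set.Finite.mem_toFinset]
    exact trace_support_subset hb hl ((Set.Finite.mem_toFinset _).1 hk) i (Set.mem_univ i)
  have hcard : (F.card : ℝ) ≤ ∏ i, ((t i).card : ℝ) := by
    calc (F.card : ℝ) ≤ ((Fintype.piFinset t).card : ℝ) := by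
          exact_mod_cast Finset.card_le_card hFsub
      _ = ∏ i, ((t i).card : ℝ) := by
          rw [Fintype.card_piFinset]; push_cast; rfl
  have hcnt : ∀ i, ((t i).card : ℝ) ≤ u i / π + 1 := by
    intro i
    have hci : 0 < b * l i := by have := hl i; positivity
    have himg : ((t i).image
        (fun x : {μ : ℝ // μ ∈ RobinEV (b * l i)} => (x : ℝ))).card = (t i).card :=
      Finset.card_image_of_injective _ Subtype.coe_injective
    have key := robin_card_bound (Λ := lam * (l i)^2) hci
      ((t i).image (fun x : {μ : ℝ // μ ∈ RobinEV (b * l i)} => (x : ℝ))) ?_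
    · rw [himg] at key
      have hsq : Real.sqrt (lam * (l i)^2) = u i := by
        rw [Real.sqrt_mul (le_of_lt hlam), Real.sqrt_sq (le_of_lt (hl i)), hu i]
        ring
      rwa [hsq] at key
    · intro μ hμ
      simp only [Finset.mem_image] at hμ
      obtain ⟨y, hy, rfl⟩ := hμ
      simp only [ht, Set.Finite.mem_toFinset] at hy
      exact ⟨y.2, hy⟩
  -- trace bound
  have hTb : cuboidRobinRiesz γ d l b lam ≤ (F.card : ℝ) * lam ^ γ := by
    rw [hT]
    calc ∑ k ∈ F, rieszWeight γ lam (∑ i, (k i : ℝ) / (l i) ^ 2)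
        ≤ ∑ _k ∈ F, lam ^ γ := by
          apply Finset.sum_le_sum
          intro k _
          apply rieszWeight_le hγ ?_ (le_of_lt hlam)
          apply Finset.sum_nonneg
          intro i _
          have h1 := robin_pos (k i).2
          have h2 := hl i
          positivity
      _ = (F.card : ℝ) * lam ^ γ := by rw [Finset.sum_const, nsmul_eq_mul]
  -- final chain
  have hfac : ∀ i, u i / π + 1 ≤ (1/π + 1/u₀) * u i := by
    intro i
    have h1 : 1/u i ≤ 1/u₀ := one_div_le_one_div_of_le hu₀ (hui i)
    have h2 := hupos i
    have h3 : u i / u₀ ≥ 1 := by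
      rw [ge_iff_le, le_div_iff₀ hu₀]; linarith [hui i]
    have he : (1/π + 1/u₀) * u i = u i/π + u i/u₀ := by ring
    rw [he]
    linarith [h3]
  have hprod : ∏ i, (u i / π + 1) ≤ (1/π + 1/u₀)^d * ∏ i, u i := by
    calc ∏ i, (u i / π + 1) ≤ ∏ i, ((1/π + 1/u₀) * u i) := by
          apply Finset.prod_le_prod
          · intro i _; have := hupos i; positivity
          · intro i _; exact hfac i
      _ = (1/π + 1/u₀)^d * ∏ i, u i := by
          rw [Finset.prod_mul_distrib, Finset.prod_const, Finset.card_univ, Fintype.card_fin]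
  have hcnt' : (F.card : ℝ) ≤ ∏ i, (u i / π + 1) := by
    apply le_trans hcard
    apply Finset.prod_le_prod
    · intro i _; exact Nat.cast_nonneg _
    · intro i _; exact hcnt i
  -- denominator rewrite
  have hDrw : Lsc γ d * (∏ i, l i) * lam ^ (γ + (d : ℝ) / 2)
      = Lsc γ d * lam ^ γ * ∏ i, u i := by
    have h1 : lam ^ (γ + (d:ℝ)/2) = lam ^ γ * lam ^ ((d:ℝ)/2) :=
      Real.rpow_add hlam _ _
    have h2 : lam ^ ((d:ℝ)/2) = Real.sqrt lam ^ d := by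
      rw [Real.sqrt_eq_rpow, ← Real.rpow_natCast (lam ^ ((1:ℝ)/2)) d,
        ← Real.rpow_mul (le_of_lt hlam)]
      congr 1
      ring
    have h3 : (∏ i, l i) * Real.sqrt lam ^ d = ∏ i, u i := by
      have hq : ∏ i, u i = ∏ i, (l i * Real.sqrt lam) :=
        Finset.prod_congr rfl (fun i _ => hu i)
      rw [hq, Finset.prod_mul_distrib, Finset.prod_const, Finset.card_univ, Fintype.card_fin]
    rw [h1, h2, ← h3]
    ring
  rw [hDrw]
  calc cuboidRobinRiesz γ d l b lam ≤ (F.card : ℝ) * lam ^ γ := hTb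
    _ ≤ (∏ i, (u i / π + 1)) * lam ^ γ := by
        apply mul_le_mul_of_nonneg_right hcnt' (Real.rpow_nonneg (le_of_lt hlam) _)
    _ ≤ ((1/π + 1/u₀)^d * ∏ i, u i) * lam ^ γ := by
        apply mul_le_mul_of_nonneg_right hprod (Real.rpow_nonneg (le_of_lt hlam) _)
    _ = M * (Lsc γ d * lam ^ γ * ∏ i, u i) := by
        rw [hM]
        field_simp

lemma rq_nonneg (γ : ℝ) (hγ : 0 ≤ γ) (d : ℕ) (β : ℝ) : 0 ≤ rq γ d β := by
  apply Real.sSup_nonneg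
  rintro x ⟨l, lam, hl, hlam, rfl⟩
  apply div_nonneg (trace_nonneg _ _ _ _ _)
  have h1 : 0 < ∏ i, l i := Finset.prod_pos (fun i _ => hl i)
  have h2 : 0 < lam ^ (γ + (d : ℝ)/2) := Real.rpow_pos_of_pos hlam _
  have h3 := Lsc_pos hγ d
  positivity

/-- cuboid trace bounded via rq. -/
lemma trace_le_rq (γ : ℝ) (hγ : 0 ≤ γ) (d : ℕ) (β : ℝ) (hβ : 0 < β)
    (l : Fin d → ℝ) (hl : ∀ i, 0 < l i) (lam : ℝ) (hlam : 0 < lam) :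
    cuboidRobinRiesz γ d l (β * Real.sqrt lam) lam
      ≤ rq γ d β * (Lsc γ d * (∏ i, l i) * lam ^ (γ + (d : ℝ) / 2)) := by
  have hD : 0 < Lsc γ d * (∏ i, l i) * lam ^ (γ + (d : ℝ)/2) := by
    have h1 : 0 < ∏ i, l i := Finset.prod_pos (fun i _ => hl i)
    have h2 : 0 < lam ^ (γ + (d : ℝ)/2) := Real.rpow_pos_of_pos hlam _
    have h3 := Lsc_pos hγ d
    positivity
  rw [← div_le_iff₀ hD]
  exact le_csSup (rq_set_bddAbove γ hγ d β hβ) ⟨l, lam, hl, hlam, rfl⟩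

set_option maxHeartbeats 2000000 in
lemma main_bound (γ : ℝ) (hγ : 0 ≤ γ) (n m : ℕ) (hn : 1 ≤ n) (hm : 1 ≤ m)
    (β : ℝ) (hβ : 0 < β) (l : Fin (n+m) → ℝ) (hl : ∀ i, 0 < l i)
    (lam : ℝ) (hlam : 0 < lam) :
    cuboidRobinRiesz γ (n+m) l (β * Real.sqrt lam) lam
      ≤ rq γ n β * rq (γ + (n:ℝ)/2) m β
        * (Lsc γ (n+m) * (∏ i, l i) * lam ^ (γ + ((n+m:ℕ):ℝ)/2)) := by
  have hπ := Real.pi_pos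
  have hsl : 0 < Real.sqrt lam := Real.sqrt_pos.2 hlam
  set b := β * Real.sqrt lam with hbdef
  have hb : 0 < b := by positivity
  set e := finSumFinEquiv (m := n) (n := m) with he
  set l₁ : Fin n → ℝ := fun a => l (e (Sum.inl a)) with hl₁def
  set l₂ : Fin m → ℝ := fun j => l (e (Sum.inr j)) with hl₂def
  have hl₁ : ∀ a, 0 < l₁ a := fun a => hl _
  have hl₂ : ∀ j, 0 < l₂ j := fun j => hl _
  set X : Fin (n+m) → Type := fun i => {μ : ℝ // μ ∈ RobinEV (b * l i)} with hX
  set K₁ := ∀ a : Fin n, {μ : ℝ // μ ∈ RobinEV (b * l₁ a)} with hK₁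
  set K₂ := ∀ j : Fin m, {μ : ℝ // μ ∈ RobinEV (b * l₂ j)} with hK₂
  set A : K₁ → ℝ := fun k₁ => ∑ a, (k₁ a : ℝ)/(l₁ a)^2 with hA
  set B : K₂ → ℝ := fun k₂ => ∑ j, (k₂ j : ℝ)/(l₂ j)^2 with hB
  set f : (∀ i, X i) → ℝ := fun k => rieszWeight γ lam (∑ i, (k i : ℝ)/(l i)^2) with hf
  have hfs : Summable f := trace_summable hb hl
  set G : K₁ × K₂ ≃ (∀ i, X i) :=
    (Equiv.sumPiEquivProdPi (fun s => X (e s))).symm.trans (Equiv.piCongrLeft X e) with hG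
  set G' : K₂ × K₁ ≃ (∀ i, X i) := (Equiv.prodComm K₂ K₁).trans G with hG'
  have hG1 : ∀ (k₁ : K₁) (k₂ : K₂) (a : Fin n), G (k₁, k₂) (e (Sum.inl a)) = k₁ a := by
    intro k₁ k₂ a
    exact Equiv.piCongrLeft_sumInl X e k₁ k₂ a
  have hG2 : ∀ (k₁ : K₁) (k₂ : K₂) (j : Fin m), G (k₁, k₂) (e (Sum.inr j)) = k₂ j := by
    intro k₁ k₂ j
    exact Equiv.piCongrLeft_sumInr X e k₁ k₂ j
  have hGval : ∀ (k₁ : K₁) (k₂ : K₂), f (G (k₁, k₂)) = rieszWeight γ lam (A k₁ + B k₂) := by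
    intro k₁ k₂
    have h0 : f (G (k₁, k₂))
        = rieszWeight γ lam (∑ i, ((G (k₁, k₂)) i : ℝ)/(l i)^2) := rfl
    rw [h0]
    congr 1
    have h1 : ∑ s : Fin n ⊕ Fin m, ((G (k₁, k₂)) (e s) : ℝ)/(l (e s))^2
        = ∑ i, ((G (k₁, k₂)) i : ℝ)/(l i)^2 :=
      Fintype.sum_equiv e _ _ (fun s => rfl)
    rw [← h1, Fintype.sum_sum_type]
    congr 1
    · exact Finset.sum_congr rfl fun a _ => by rw [hG1]
    · exact Finset.sum_congr rfl fun j _ => by rw [hG2]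
  have hG'sum : Summable (fun p : K₂ × K₁ => f (G' p)) := G'.summable_iff.2 hfs
  -- Step 1 : splitting
  have step1 : cuboidRobinRiesz γ (n+m) l b lam
      = ∑' k₂ : K₂, ∑' k₁ : K₁, rieszWeight γ lam (A k₁ + B k₂) := by
    have h0 : cuboidRobinRiesz γ (n+m) l b lam = ∑' k, f k := rfl
    rw [h0, ← G'.tsum_eq f]
    rw [show (fun p : K₂ × K₁ => f (G' p)) = fun p : K₂ × K₁ => f (G' p) from rfl] at hG'sum
    rw [Summable.tsum_prod' hG'sum (fun k₂ => hG'sum.prod_factor k₂)]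
    apply tsum_congr; intro k₂
    apply tsum_congr; intro k₁
    have : G' (k₂, k₁) = G (k₁, k₂) := rfl
    rw [this, hGval]
  -- Step 2 : inner bound
  have hBnn : ∀ k₂ : K₂, 0 ≤ B k₂ := by
    intro k₂
    apply Finset.sum_nonneg
    intro j _
    have := robin_pos (k₂ j).2
    have := hl₂ j
    positivity
  have hApos : ∀ k₁ : K₁, 0 < A k₁ := by
    intro k₁
    apply Finset.sum_pos ?_ ⟨⟨0, hn⟩, Finset.mem_univ _⟩
    intro a _
    have := robin_pos (k₁ a).2
    have := hl₁ a
    positivity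
  have step2 : ∀ k₂ : K₂, (∑' k₁ : K₁, rieszWeight γ lam (A k₁ + B k₂))
      ≤ rq γ n β * (Lsc γ n * (∏ a, l₁ a) * rieszWeight (γ + (n:ℝ)/2) lam (B k₂)) := by
    intro k₂
    have hrw : (fun k₁ : K₁ => rieszWeight γ lam (A k₁ + B k₂))
        = fun k₁ : K₁ => rieszWeight γ (lam - B k₂) (A k₁) := by
      funext k₁; exact rieszWeight_shift γ lam (A k₁) (B k₂)
    rcases le_or_gt (lam - B k₂) 0 with hneg | hpos
    · have hz : (∑' k₁ : K₁, rieszWeight γ lam (A k₁ + B k₂)) = 0 := by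
        rw [hrw]
        convert tsum_zero with k₁
        exact rieszWeight_zero_of (lt_of_le_of_lt hneg (hApos k₁))
      rw [hz]
      have h1 := rq_nonneg γ hγ n β
      have h2 := Lsc_pos hγ n
      have h3 : 0 < ∏ a, l₁ a := Finset.prod_pos (fun a _ => hl₁ a)
      have h4 := rieszWeight_nonneg (γ + (n:ℝ)/2) lam (B k₂)
      positivity
    · set lam' := lam - B k₂ with hlam'def
      have hlam' : 0 < lam' := hpos
      have hlamle : lam' ≤ lam := by
        have := hBnn k₂; rw [hlam'def]; linarith
      have hble : β * Real.sqrt lam' ≤ b := by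
        rw [hbdef]
        apply mul_le_mul_of_nonneg_left (Real.sqrt_le_sqrt hlamle) (le_of_lt hβ)
      have hbst : 0 < β * Real.sqrt lam' := by
        have : 0 < Real.sqrt lam' := Real.sqrt_pos.2 hlam'
        positivity
      have heq : (∑' k₁ : K₁, rieszWeight γ lam (A k₁ + B k₂))
          = cuboidRobinRiesz γ n l₁ b lam' := by
        rw [hrw]; rfl
      rw [heq]
      calc cuboidRobinRiesz γ n l₁ b lam'
          ≤ cuboidRobinRiesz γ n l₁ (β * Real.sqrt lam') lam' :=
            trace_mono_b hγ hl₁ hbst hble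
        _ ≤ rq γ n β * (Lsc γ n * (∏ a, l₁ a) * lam' ^ (γ + (n:ℝ)/2)) :=
            trace_le_rq γ hγ n β hβ l₁ hl₁ lam' hlam'
        _ = rq γ n β * (Lsc γ n * (∏ a, l₁ a) * rieszWeight (γ + (n:ℝ)/2) lam (B k₂)) := by
            rw [rieszWeight_pow (by linarith : B k₂ ≤ lam)]
  -- Step 3 : outer sum
  have hsum_g : Summable (fun k₂ : K₂ => ∑' k₁ : K₁, rieszWeight γ lam (A k₁ + B k₂)) := by
    have h := hG'sum.prod
    refine h.congr (fun k₂ => ?_)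
    apply tsum_congr
    intro k₁
    have : G' (k₂, k₁) = G (k₁, k₂) := rfl
    rw [this, hGval]
  have hsum_rhs : Summable (fun k₂ : K₂ =>
      rq γ n β * (Lsc γ n * (∏ a, l₁ a) * rieszWeight (γ + (n:ℝ)/2) lam (B k₂))) := by
    have h : Summable (fun k₂ : K₂ => rieszWeight (γ + (n:ℝ)/2) lam (B k₂)) :=
      trace_summable hb hl₂
    exact ((h.mul_left _).mul_left _)
  have step3 : cuboidRobinRiesz γ (n+m) l b lam
      ≤ rq γ n β * (Lsc γ n * (∏ a, l₁ a)) * cuboidRobinRiesz (γ + (n:ℝ)/2) m l₂ b lam := by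
    rw [step1]
    calc (∑' k₂ : K₂, ∑' k₁ : K₁, rieszWeight γ lam (A k₁ + B k₂))
        ≤ ∑' k₂ : K₂, rq γ n β * (Lsc γ n * (∏ a, l₁ a) * rieszWeight (γ + (n:ℝ)/2) lam (B k₂)) :=
          Summable.tsum_le_tsum step2 hsum_g hsum_rhs
      _ = rq γ n β * (Lsc γ n * (∏ a, l₁ a)) * cuboidRobinRiesz (γ + (n:ℝ)/2) m l₂ b lam := by
          rw [show cuboidRobinRiesz (γ + (n:ℝ)/2) m l₂ b lam
            = ∑' k₂ : K₂, rieszWeight (γ + (n:ℝ)/2) lam (B k₂) from rfl]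
          rw [← tsum_mul_left]
          apply tsum_congr; intro k₂; ring
  -- Step 4
  have step4 : cuboidRobinRiesz (γ + (n:ℝ)/2) m l₂ b lam
      ≤ rq (γ + (n:ℝ)/2) m β * (Lsc (γ + (n:ℝ)/2) m * (∏ j, l₂ j) * lam ^ ((γ + (n:ℝ)/2) + (m:ℝ)/2)) := by
    exact trace_le_rq (γ + (n:ℝ)/2) (by positivity) m β hβ l₂ hl₂ lam hlam
  -- combine
  have hpre : 0 ≤ rq γ n β * (Lsc γ n * (∏ a, l₁ a)) := by
    have h1 := rq_nonneg γ hγ n β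
    have h2 := Lsc_pos hγ n
    have h3 : 0 < ∏ a, l₁ a := Finset.prod_pos (fun a _ => hl₁ a)
    positivity
  have final : cuboidRobinRiesz γ (n+m) l b lam
      ≤ rq γ n β * (Lsc γ n * (∏ a, l₁ a)) *
        (rq (γ + (n:ℝ)/2) m β * (Lsc (γ + (n:ℝ)/2) m * (∏ j, l₂ j) * lam ^ ((γ + (n:ℝ)/2) + (m:ℝ)/2))) :=
    le_trans step3 (mul_le_mul_of_nonneg_left step4 hpre)
  have hprodsplit : (∏ a, l₁ a) * (∏ j, l₂ j) = ∏ i, l i := by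
    calc (∏ a, l₁ a) * (∏ j, l₂ j)
        = ∏ s : Fin n ⊕ Fin m, l (e s) := by rw [Fintype.prod_sum_type]
      _ = ∏ i, l i := Fintype.prod_equiv e _ _ (fun s => rfl)
  have hexp : (γ + (n:ℝ)/2) + (m:ℝ)/2 = γ + ((n+m:ℕ):ℝ)/2 := by push_cast; ring
  calc cuboidRobinRiesz γ (n+m) l b lam
      ≤ rq γ n β * (Lsc γ n * (∏ a, l₁ a)) *
        (rq (γ + (n:ℝ)/2) m β * (Lsc (γ + (n:ℝ)/2) m * (∏ j, l₂ j) * lam ^ ((γ + (n:ℝ)/2) + (m:ℝ)/2))) := final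
    _ = rq γ n β * rq (γ + (n:ℝ)/2) m β *
        ((Lsc γ n * Lsc (γ + (n:ℝ)/2) m) * ((∏ a, l₁ a) * (∏ j, l₂ j)) * lam ^ ((γ + (n:ℝ)/2) + (m:ℝ)/2)) := by
        ring
    _ = rq γ n β * rq (γ + (n:ℝ)/2) m β
        * (Lsc γ (n+m) * (∏ i, l i) * lam ^ (γ + ((n+m:ℕ):ℝ)/2)) := by
        rw [Lsc_mul hγ n m, hprodsplit, hexp]


end AuxRobin

/-- submultiplicativity
r_{γ,d}(β) ≤ r_{γ,d-m}(β) · r_{γ+(d-m)/2, m}(β) for 1 ≤ m ≤ d-1. -/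
theorem rq_submultiplicative
    (γ : ℝ) (hγ : 0 ≤ γ) (d m : ℕ) (hd : 2 ≤ d) (hm : 1 ≤ m) (hmd : m ≤ d - 1)
    (β : ℝ) (hβ : 0 < β) :
    rq γ d β ≤ rq γ (d - m) β * rq (γ + ((d : ℝ) - (m : ℝ)) / 2) m β := by

  obtain ⟨n, hn1, hd'⟩ : ∃ n, 1 ≤ n ∧ d = n + m := ⟨d - m, by omega, by omega⟩
  subst hd'
  have hnmn : n + m - m = n := by omega
  have hcast : (((n + m : ℕ) : ℝ) - (m : ℝ)) / 2 = (n:ℝ)/2 := by push_cast; ring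
  rw [hcast]
  have hnm : n + m - m = n := by omega
  rw [hnm]
  apply Real.sSup_le
  · rintro x ⟨l, lam, hl, hlam, rfl⟩
    have hD : 0 < Lsc γ (n+m) * (∏ i, l i) * lam ^ (γ + ((n+m:ℕ) : ℝ)/2) := by
      have h1 : 0 < ∏ i, l i := Finset.prod_pos (fun i _ => hl i)
      have h2 : 0 < lam ^ (γ + ((n+m:ℕ) : ℝ)/2) := Real.rpow_pos_of_pos hlam _
      have h3 := Lsc_pos hγ (n+m)
      positivity
    rw [div_le_iff₀ hD]
    calc cuboidRobinRiesz γ (n+m) l (β * Real.sqrt lam) lam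
        ≤ rq γ n β * rq (γ + (n:ℝ)/2) m β
          * (Lsc γ (n+m) * (∏ i, l i) * lam ^ (γ + ((n+m:ℕ):ℝ)/2)) :=
          main_bound γ hγ n m hn1 hm β hβ l hl lam hlam
      _ = rq γ n β * rq (γ + (n:ℝ)/2) m β
          * (Lsc γ (n+m) * (∏ i, l i) * lam ^ (γ + ((n+m:ℕ):ℝ)/2)) := rfl
  · exact mul_nonneg (rq_nonneg γ hγ n β) (rq_nonneg (γ + (n:ℝ)/2) (by positivity) m β)
end
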